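/- arXiv:2005.03287 — 4 statements merged into one kernel-verified Lean document; each statement's English description precedes it below -/
import Mathlib

section
/- Let A, B ∈ ℝ^{n×n} with A + B nonsingular. Then the generalized absolute value equation Ax + B|x| = b has a unique solution for every b ∈ ℝ^n if and only if the matrix (A+B)^{-1}(A−B) is a P-matrix. -/
open Matrix

/-- A square real matrix is a `P`-matrix if all of its principal minors are positive. -/
def IsPMatrix {n : ℕ} (M : Matrix (Fin n) (Fin n) ℝ) : Prop :=
  ∀ s : Finset (Fin n), s.Nonempty →
    0 < (M.submatrix (fun i : s => (i : Fin n)) (fun i : s => (i : Fin n))).det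

/-- The (unordered) singular values of a real square matrix: square roots of the
eigenvalues of `Aᵀ * A`. -/
noncomputable def singVals {n : ℕ} (A : Matrix (Fin n) (Fin n) ℝ) : Fin n → ℝ :=
  fun i => Real.sqrt ((Matrix.isHermitian_conjTranspose_mul_self A).eigenvalues i)

/-- `svalsDecr A i` is the `i`-th largest singular value of `A` (so `svalsDecr A 0 = σ₁`). -/
noncomputable def svalsDecr {n : ℕ} (A : Matrix (Fin n) (Fin n) ℝ) : Fin n → ℝ :=
  fun i => singVals A (Tuple.sort (singVals A) (Fin.rev i))

/-- The maximal singular value `σ₁`. -/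
noncomputable def maxSV {n : ℕ} (A : Matrix (Fin n) (Fin n) ℝ) : ℝ :=
  ⨆ i, singVals A i

/-- The minimal singular value `σₙ`. -/
noncomputable def minSV {n : ℕ} (A : Matrix (Fin n) (Fin n) ℝ) : ℝ :=
  ⨅ i, singVals A i

/-- The spectral radius of a real square matrix (as the spectral radius of its
complexification), valued in `ℝ≥0∞`. -/
noncomputable def specRad {n : ℕ} (A : Matrix (Fin n) (Fin n) ℝ) : ENNReal :=
  spectralRadius ℂ (A.map (Complex.ofReal))

open Filter

/-- "No sign reversal": for every nonzero `x` some component of `x` and `M x` have the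
same strict sign. -/
def NSR {m : Type*} [Fintype m] (M : Matrix m m ℝ) : Prop :=
  ∀ x : m → ℝ, x ≠ 0 → ∃ i, 0 < x i * (M *ᵥ x) i

/-- Solutions of the linear complementarity problem `LCP(M, q)`. -/
def Sol {m : Type*} [Fintype m] (M : Matrix m m ℝ) (q x : m → ℝ) : Prop :=
  (∀ i, 0 ≤ x i) ∧ (∀ i, 0 ≤ (M *ᵥ x + q) i) ∧ ∀ i, x i * (M *ᵥ x + q) i = 0

theorem Sol.unique {m : Type*} [Fintype m] {M : Matrix m m ℝ} (hM : NSR M) {q x y : m → ℝ}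
    (hx : Sol M q x) (hy : Sol M q y) : x = y := by
  by_contra hne
  obtain ⟨i, hi⟩ := hM (x - y) (sub_ne_zero.mpr hne)
  have h1 : (x - y) i * (M *ᵥ (x - y)) i
      = (x i - y i) * ((M *ᵥ x + q) i - (M *ᵥ y + q) i) := by
    simp only [Matrix.mulVec_sub, Pi.sub_apply, Pi.add_apply]; ring
  rw [h1] at hi
  nlinarith [hx.1 i, hx.2.1 i, hx.2.2 i, hy.1 i, hy.2.1 i, hy.2.2 i]

theorem NSR.submatrix {m m' : Type*} [Fintype m] [Fintype m'] [DecidableEq m]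
    {M : Matrix m m ℝ} (hM : NSR M) (f : m' → m) (hf : Function.Injective f) :
    NSR (M.submatrix f f) := by
  classical
  intro x' hx'
  set x : m → ℝ := fun j => if h : ∃ i, f i = j then x' h.choose else 0 with hxdef
  have hxf : ∀ i, x (f i) = x' i := by
    intro i
    have h : ∃ i', f i' = f i := ⟨i, rfl⟩
    simp only [hxdef, dif_pos h]
    exact congrArg x' (hf h.choose_spec)
  have hx0 : ∀ j, (¬ ∃ i, f i = j) → x j = 0 := by
    intro j hj; simp only [hxdef, dif_neg hj]
  have hsum : ∀ j, (M *ᵥ x) j = ∑ i', M j (f i') * x' i' := by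
    intro j
    have h1 : (M *ᵥ x) j = ∑ j' : m, M j j' * x j' := by
      simp [Matrix.mulVec, dotProduct]
    rw [h1, ← Finset.sum_subset (Finset.subset_univ (Finset.univ.image f))]
    · rw [Finset.sum_image (fun a _ b _ h => hf h)]
      exact Finset.sum_congr rfl fun i' _ => by rw [hxf]
    · intro j' _ hj'
      have : ¬ ∃ i, f i = j' := by
        rintro ⟨i, rfl⟩; exact hj' (Finset.mem_image_of_mem f (Finset.mem_univ i))
      rw [hx0 j' this, mul_zero]
  have hxne : x ≠ 0 := by
    intro h
    apply hx'
    funext i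
    have := congrFun h (f i)
    rw [hxf] at this
    exact this
  obtain ⟨j, hj⟩ := hM x hxne
  have hjx : x j ≠ 0 := fun h => by simp [h] at hj
  have hjr : ∃ i, f i = j := by
    by_contra h; exact hjx (hx0 j h)
  obtain ⟨i, rfl⟩ := hjr
  refine ⟨i, ?_⟩
  have hmv : (M.submatrix f f *ᵥ x') i = (M *ᵥ x) (f i) := by
    rw [hsum]
    simp [Matrix.mulVec, dotProduct, Matrix.submatrix_apply]
  rw [hmv, ← hxf i]
  exact hj

theorem NSR.det_pos {m : Type*} [Fintype m] [DecidableEq m] {M : Matrix m m ℝ} (hM : NSR M) :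
    0 < M.det := by
  have key : ∀ t : ℝ, 0 < t → t ≤ 1 → (t • M + (1 - t) • (1 : Matrix m m ℝ)).det ≠ 0 := by
    intro t ht htle h0
    obtain ⟨v, hv, hker⟩ := (Matrix.exists_mulVec_eq_zero_iff).mpr h0
    obtain ⟨i, hi⟩ := hM v hv
    have h1 : t * (M *ᵥ v) i + (1 - t) * v i = 0 := by
      have := congrFun hker i
      simpa [Matrix.add_mulVec, Matrix.smul_mulVec] using this
    have h2 : (t * (M *ᵥ v) i + (1 - t) * v i) * v i = 0 := by rw [h1, zero_mul]
    nlinarith [h2, mul_pos ht hi, sq_nonneg (v i)]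
  by_contra hdet
  push_neg at hdet
  set F : ℝ → ℝ := fun t => (t • M + (1 - t) • (1 : Matrix m m ℝ)).det with hF
  have hFc : Continuous F := by
    have h1 : Continuous fun t : ℝ => t • M + (1 - t) • (1 : Matrix m m ℝ) :=
      (continuous_id.smul continuous_const).add
        ((continuous_const.sub continuous_id).smul continuous_const)
    exact h1.matrix_det
  have hF0 : F 0 = 1 := by simp [hF]
  have hF1 : F 1 = M.det := by simp [hF]
  rcases eq_or_lt_of_le hdet with heq | hlt
  · exact key 1 one_pos le_rfl (by simpa using heq)
  · have hmem : (0:ℝ) ∈ Set.Icc (F 1) (F 0) := by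
      rw [hF0, hF1]; exact ⟨hlt.le, zero_le_one⟩
    obtain ⟨t, htI, hFt⟩ := intermediate_value_Icc' zero_le_one hFc.continuousOn hmem
    have ht0 : t ≠ 0 := by
      intro h; rw [h, hF0] at hFt; exact one_ne_zero hFt
    exact key t (lt_of_le_of_ne htI.1 (Ne.symm ht0)) htI.2 hFt


theorem det_piecewise_single {m : Type*} [Fintype m] [DecidableEq m]
    (N : Matrix m m ℝ) (T : Finset m) :
    Matrix.det (Matrix.of (T.piecewise (fun i j => if j = i then (1:ℝ) else 0) (fun i => N i)))
      = (N.submatrix ((↑) : (Tᶜ : Finset m) → m) ((↑) : (Tᶜ : Finset m) → m)).det := by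
  classical
  set X : Matrix m m ℝ := Matrix.of (T.piecewise (fun i j => if j = i then (1:ℝ) else 0) (fun i => N i))
  set e : {x // x ∈ T} ⊕ {x // ¬ x ∈ T} ≃ m := Equiv.sumCompl (· ∈ T)
  have hblock : X.submatrix e e =
      Matrix.fromBlocks 1 0
        (Matrix.of fun (i : {x // ¬ x ∈ T}) (j : {x // x ∈ T}) => N i j)
        (N.submatrix (Subtype.val) (Subtype.val)) := by
    ext i j
    cases i with
    | inl a =>
      cases j with
      | inl b =>
        simp only [Matrix.submatrix_apply, Matrix.fromBlocks_apply₁₁, e,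
          Equiv.sumCompl_apply_inl, X, Matrix.of_apply, Finset.piecewise_eq_of_mem _ _ _ a.2,
          Matrix.one_apply]
        by_cases hab : a = b
        · subst hab; simp
        · rw [if_neg (fun h => hab (Subtype.ext h.symm)), if_neg hab]
      | inr b =>
        simp only [Matrix.submatrix_apply, Matrix.fromBlocks_apply₁₂, e,
          Equiv.sumCompl_apply_inl, Equiv.sumCompl_apply_inr, X, Matrix.of_apply,
          Finset.piecewise_eq_of_mem _ _ _ a.2, Pi.single_apply]
        have : (b : m) ≠ (a : m) := fun h => b.2 (h ▸ a.2)
        simp [this]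
    | inr a =>
      cases j with
      | inl b =>
        simp [Matrix.submatrix_apply, Matrix.fromBlocks_apply₂₁, e,
          Equiv.sumCompl_apply_inl, Equiv.sumCompl_apply_inr, X,
          Finset.piecewise_eq_of_notMem _ _ _ a.2]
      | inr b =>
        simp [Matrix.submatrix_apply, Matrix.fromBlocks_apply₂₂, e,
          Equiv.sumCompl_apply_inr, X, Finset.piecewise_eq_of_notMem _ _ _ a.2]
  have h1 : X.det = (X.submatrix e e).det := (Matrix.det_submatrix_equiv_self e X).symm
  rw [h1, hblock, Matrix.det_fromBlocks_zero₁₂, Matrix.det_one, one_mul]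
  -- transport between subtype of ¬∈T and ↥(Tᶜ)
  set e' : ((Tᶜ : Finset m) : Type _) ≃ {x // ¬ x ∈ T} :=
    Equiv.subtypeEquivRight (fun x => Finset.mem_compl)
  have h2 : (N.submatrix ((↑) : (Tᶜ : Finset m) → m) ((↑) : (Tᶜ : Finset m) → m))
      = (N.submatrix (Subtype.val : {x // ¬ x ∈ T} → m) Subtype.val).submatrix e' e' := by
    ext i j; rfl
  rw [h2, Matrix.det_submatrix_equiv_self]

theorem det_add_diagonal {m : Type*} [Fintype m] [DecidableEq m] (N : Matrix m m ℝ) (d : m → ℝ) :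
    (N + Matrix.diagonal d).det
      = ∑ T : Finset m, (∏ i ∈ T, d i) *
          (N.submatrix ((↑) : (Tᶜ : Finset m) → m) ((↑) : (Tᶜ : Finset m) → m)).det := by
  classical
  set Drow : m → m → ℝ := fun i j => d i * (if j = i then (1:ℝ) else 0) with hDrow
  set Nrow : m → m → ℝ := fun i => N i with hNrow
  set Erow : m → m → ℝ := fun i j => if j = i then (1:ℝ) else 0 with hErow
  have hrows : (N + Matrix.diagonal d) = Matrix.of (Drow + Nrow) := by
    ext i j
    by_cases h : i = j <;>
      simp [hDrow, hNrow, Matrix.diagonal_apply, h, eq_comm, add_comm]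
  rw [hrows]
  have hstep := Matrix.detRowAlternating.toMultilinearMap.map_add_univ Drow Nrow
  rw [AlternatingMap.coe_multilinearMap] at hstep
  have hdet2 : (Matrix.of (Drow + Nrow)).det = Matrix.detRowAlternating (Drow + Nrow) := rfl
  rw [hdet2, hstep]
  refine Finset.sum_congr rfl fun T _ => ?_
  have hpw : T.piecewise Drow Nrow
      = T.piecewise (fun i => d i • (T.piecewise Erow Nrow) i) (T.piecewise Erow Nrow) := by
    funext i
    by_cases h : i ∈ T
    · rw [Finset.piecewise_eq_of_mem _ _ _ h, Finset.piecewise_eq_of_mem _ _ _ h,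
        Finset.piecewise_eq_of_mem _ _ _ h]
      funext j; simp [hDrow, hErow]
    · rw [Finset.piecewise_eq_of_notMem _ _ _ h, Finset.piecewise_eq_of_notMem _ _ _ h,
        Finset.piecewise_eq_of_notMem _ _ _ h]
  have hsm := Matrix.detRowAlternating.toMultilinearMap.map_piecewise_smul d (T.piecewise Erow Nrow) T
  rw [AlternatingMap.coe_multilinearMap] at hsm
  rw [hpw, hsm, ← det_piecewise_single N T]
  simp only [smul_eq_mul]
  rfl

theorem minor_transport {n : ℕ} {M : Matrix (Fin n) (Fin n) ℝ} (hP : IsPMatrix M)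
    (s : Finset (Fin n)) (U : Finset ((s : Finset (Fin n)) : Type)) (hU : U.Nonempty) :
    0 < ((M.submatrix ((↑) : s → Fin n) ((↑) : s → Fin n)).submatrix
        ((↑) : U → s) ((↑) : U → s)).det := by
  classical
  set s' : Finset (Fin n) := U.map (Function.Embedding.subtype _) with hs'
  have hs'ne : s'.Nonempty := by
    obtain ⟨a, ha⟩ := hU
    exact ⟨(a : Fin n), Finset.mem_map_of_mem _ ha⟩
  set f : U → s' := fun i => ⟨((i : s) : Fin n), Finset.mem_map_of_mem _ i.2⟩ with hf
  have hbij : Function.Bijective f := by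
    constructor
    · intro a b h
      have h' := congrArg (fun (z : { x // x ∈ s' }) => (z : Fin n)) h
      exact Subtype.ext (Subtype.ext h')
    · intro j
      obtain ⟨a, ha, hav⟩ := Finset.mem_map.mp j.2
      exact ⟨⟨a, ha⟩, by apply Subtype.ext; exact hav⟩
  set e : (U : Type) ≃ (s' : Type) := Equiv.ofBijective f hbij with he
  have h1 : ((M.submatrix ((↑) : s' → Fin n) ((↑) : s' → Fin n)).submatrix e e).det
      = (M.submatrix ((↑) : s' → Fin n) ((↑) : s' → Fin n)).det :=
    Matrix.det_submatrix_equiv_self e _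
  have h2 : (M.submatrix ((↑) : s' → Fin n) ((↑) : s' → Fin n)).submatrix e e
      = (M.submatrix ((↑) : s → Fin n) ((↑) : s → Fin n)).submatrix
          ((↑) : U → s) ((↑) : U → s) := by
    ext i j; rfl
  rw [← h2, h1]
  have := hP s' hs'ne
  convert this using 2

theorem nsr_of_isPMatrix {n : ℕ} {M : Matrix (Fin n) (Fin n) ℝ} (hP : IsPMatrix M) : NSR M := by
  classical
  intro x hx
  by_contra hcon
  push_neg at hcon
  set s : Finset (Fin n) := Finset.univ.filter (fun i => x i ≠ 0) with hs
  have hzero : ∀ i : Fin n, i ∉ s → x i = 0 := by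
    intro i h
    by_contra h'
    exact h (by simp [hs, h'])
  set N := M.submatrix ((↑) : s → Fin n) ((↑) : s → Fin n) with hN
  set ξ : s → ℝ := fun i => x i with hξ
  have hξne : ∀ i : s, ξ i ≠ 0 := fun i => (Finset.mem_filter.mp i.2).2
  have hNξ : ∀ i : s, (N *ᵥ ξ) i = (M *ᵥ x) (i : Fin n) := by
    intro i
    have h1 : (N *ᵥ ξ) i = ∑ j : s, M (i : Fin n) (j : Fin n) * x (j : Fin n) := by
      simp [hN, hξ, Matrix.mulVec, dotProduct, Matrix.submatrix_apply]
    have h2 : ∑ j : s, M (i : Fin n) (j : Fin n) * x (j : Fin n)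
        = ∑ j ∈ s, M (i : Fin n) j * x j := Finset.sum_coe_sort s (fun j => M (i : Fin n) j * x j)
    have h3 : ∑ j ∈ s, M (i : Fin n) j * x j = ∑ j : Fin n, M (i : Fin n) j * x j :=
      Finset.sum_subset (Finset.subset_univ s) (fun j _ hj => by rw [hzero j hj, mul_zero])
    rw [h1, h2, h3]
    simp [Matrix.mulVec, dotProduct]
  set d : s → ℝ := fun i => -((N *ᵥ ξ) i / ξ i) with hd
  have hd0 : ∀ i, 0 ≤ d i := by
    intro i
    have hle : ξ i * (N *ᵥ ξ) i ≤ 0 := by rw [hNξ]; exact hcon (i : Fin n)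
    have : (N *ᵥ ξ) i / ξ i ≤ 0 := by
      rcases (hξne i).lt_or_gt with h | h
      · apply div_nonpos_of_nonneg_of_nonpos _ h.le
        nlinarith
      · apply div_nonpos_of_nonpos_of_nonneg _ h.le
        nlinarith
    simpa [hd] using neg_nonneg.mpr this
  have hker : (N + Matrix.diagonal d) *ᵥ ξ = 0 := by
    funext i
    have : ((N + Matrix.diagonal d) *ᵥ ξ) i = (N *ᵥ ξ) i + d i * ξ i := by
      simp [Matrix.add_mulVec, Matrix.mulVec_diagonal]
    rw [this]
    show (N *ᵥ ξ) i + -((N *ᵥ ξ) i / ξ i) * ξ i = 0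
    rw [neg_mul, div_mul_cancel₀ _ (hξne i), add_neg_cancel]
  have hξ0 : ξ ≠ 0 := by
    obtain ⟨i, hi⟩ := Function.ne_iff.mp hx
    have hmem : i ∈ s := by
      simp only [hs, Finset.mem_filter, Finset.mem_univ, true_and]
      simpa using hi
    intro h
    exact hξne ⟨i, hmem⟩ (congrFun h ⟨i, hmem⟩)
  have hdet0 : (N + Matrix.diagonal d).det = 0 :=
    (Matrix.exists_mulVec_eq_zero_iff).mp ⟨ξ, hξ0, hker⟩
  rw [det_add_diagonal] at hdet0
  have hpos : ∀ T : Finset (s : Type),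
      0 < (N.submatrix ((↑) : (Tᶜ : Finset (s:Type)) → s) ((↑) : (Tᶜ : Finset (s:Type)) → s)).det := by
    intro T
    rcases (Tᶜ : Finset (s : Type)).eq_empty_or_nonempty with hE | hNE
    · haveI : IsEmpty ((Tᶜ : Finset (s : Type)) : Type) := Finset.isEmpty_coe_sort.2 hE
      rw [Matrix.det_isEmpty]
      exact one_pos
    · exact minor_transport hP s Tᶜ hNE
  have hgt : 0 < ∑ T : Finset (s : Type), (∏ i ∈ T, d i) *
      (N.submatrix ((↑) : (Tᶜ : Finset (s:Type)) → s) ((↑) : (Tᶜ : Finset (s:Type)) → s)).det := by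
    apply Finset.sum_pos'
    · intro T _
      exact mul_nonneg (Finset.prod_nonneg fun i _ => hd0 i) (hpos T).le
    · refine ⟨∅, Finset.mem_univ _, ?_⟩
      simpa using hpos ∅
  rw [hdet0] at hgt
  exact lt_irrefl 0 hgt

theorem isPMatrix_of_nsr {n : ℕ} {M : Matrix (Fin n) (Fin n) ℝ} (hM : NSR M) : IsPMatrix M :=
  fun s _ => (hM.submatrix ((↑) : s → Fin n) Subtype.val_injective).det_pos

theorem tendsto_comp_apply {m : Type*} [Fintype m] {x : ℕ → m → ℝ} {X : m → ℝ}
    (hx : Tendsto x atTop (nhds X)) (i : m) :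
    Tendsto (fun k => x k i) atTop (nhds (X i)) :=
  ((continuous_apply i).tendsto X).comp hx

theorem tendsto_w {m : Type*} [Fintype m] (M : Matrix m m ℝ) {x p : ℕ → m → ℝ} {X P : m → ℝ}
    (hx : Tendsto x atTop (nhds X)) (hp : Tendsto p atTop (nhds P)) (i : m) :
    Tendsto (fun k => (M *ᵥ x k + p k) i) atTop (nhds ((M *ᵥ X + P) i)) := by
  have hform : ∀ (y r : m → ℝ), (M *ᵥ y + r) i = (∑ j, M i j * y j) + r i := by
    intro y r; simp [Matrix.mulVec, dotProduct]
  simp only [hform]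
  exact (tendsto_finset_sum _ fun j _ =>
    (tendsto_const_nhds.mul (tendsto_comp_apply hx j))).add (tendsto_comp_apply hp i)

theorem sol_lim {m : Type*} [Fintype m] (M : Matrix m m ℝ) {x q : ℕ → m → ℝ} {X Q : m → ℝ}
    (hx : Tendsto x atTop (nhds X)) (hq : Tendsto q atTop (nhds Q))
    (hs : ∀ k, Sol M (q k) (x k)) : Sol M Q X := by
  refine ⟨fun i => ?_, fun i => ?_, fun i => ?_⟩
  · exact ge_of_tendsto' (tendsto_comp_apply hx i) fun k => (hs k).1 i
  · exact ge_of_tendsto' (tendsto_w M hx hq i) fun k => (hs k).2.1 i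
  · exact tendsto_nhds_unique
      (((tendsto_comp_apply hx i).mul (tendsto_w M hx hq i)))
      (by simpa only [fun k => (hs k).2.2 i] using (tendsto_const_nhds : Tendsto (fun _ : ℕ => (0:ℝ)) atTop (nhds 0)))

theorem Sol.smul {m : Type*} [Fintype m] {M : Matrix m m ℝ} {q x : m → ℝ} (h : Sol M q x)
    {c : ℝ} (hc : 0 ≤ c) : Sol M (c • q) (c • x) := by
  have hmv : M *ᵥ (c • x) + c • q = c • (M *ᵥ x + q) := by
    rw [Matrix.mulVec_smul, smul_add]
  refine ⟨fun i => ?_, fun i => ?_, fun i => ?_⟩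
  · exact mul_nonneg hc (h.1 i)
  · rw [hmv]; exact mul_nonneg hc (h.2.1 i)
  · rw [hmv]
    show c * x i * (c * (M *ᵥ x + q) i) = 0
    calc c * x i * (c * (M *ᵥ x + q) i) = c ^ 2 * (x i * (M *ᵥ x + q) i) := by ring
      _ = 0 := by rw [h.2.2 i, mul_zero]

theorem sol_norm_bound {m : Type*} [Fintype m] {M : Matrix m m ℝ} (hM : NSR M) :
    ∃ c : ℝ, ∀ q x : m → ℝ, Sol M q x → ‖x‖ ≤ c * ‖q‖ := by
  by_contra hc
  push_neg at hc
  choose q x hsol hlt using fun k : ℕ => hc k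
  have hr : ∀ k : ℕ, 0 < ‖x k‖ := fun k =>
    lt_of_le_of_lt (mul_nonneg (Nat.cast_nonneg k) (norm_nonneg _)) (hlt k)
  set u : ℕ → m → ℝ := fun k => (‖x k‖)⁻¹ • x k with hu
  set p : ℕ → m → ℝ := fun k => (‖x k‖)⁻¹ • q k with hp
  have husol : ∀ k, Sol M (p k) (u k) := fun k =>
    (hsol k).smul (inv_nonneg.mpr (hr k).le)
  have humem : ∀ k, u k ∈ Metric.sphere (0 : m → ℝ) 1 := by
    intro k
    rw [mem_sphere_zero_iff_norm, hu, norm_smul, norm_inv, norm_norm,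
      inv_mul_cancel₀ (hr k).ne']
  have hp0 : Tendsto p atTop (nhds 0) := by
    refine squeeze_zero_norm' ?_ (tendsto_one_div_atTop_nhds_zero_nat)
    · filter_upwards [eventually_ge_atTop 1] with k hk
      have hk0 : (0:ℝ) < (k : ℝ) := by exact_mod_cast hk
      rw [hp, norm_smul, norm_inv, norm_norm]
      rw [div_eq_mul_inv, one_mul]
      rw [inv_mul_le_iff₀ (hr k) ]
      calc ‖q k‖ = ((k:ℝ))⁻¹ * ((k:ℝ) * ‖q k‖) := by field_simp
        _ ≤ (k:ℝ)⁻¹ * ‖x k‖ := by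
            exact mul_le_mul_of_nonneg_left (hlt k).le (inv_nonneg.mpr hk0.le)
        _ = ‖x k‖ * (k:ℝ)⁻¹ := by ring
  obtain ⟨U, hUmem, φ, hφ, hconv⟩ :=
    (isCompact_sphere (0 : m → ℝ) 1).tendsto_subseq humem
  have hUsol : Sol M 0 U :=
    sol_lim M hconv (hp0.comp hφ.tendsto_atTop) (fun k => husol (φ k))
  have hUne : U ≠ 0 := by
    intro h
    rw [mem_sphere_zero_iff_norm, h, norm_zero] at hUmem
    exact one_ne_zero hUmem.symm
  obtain ⟨i, hi⟩ := hM U hUne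
  have := hUsol.2.2 i
  rw [add_zero] at this
  rw [this] at hi
  exact lt_irrefl 0 hi

theorem nsr_exists : ∀ (n : ℕ) (M : Matrix (Fin n) (Fin n) ℝ), NSR M →
    ∀ q : Fin n → ℝ, ∃ x, Sol M q x := by
  intro n
  induction n with
  | zero =>
    intro M _ q
    exact ⟨0, fun i => i.elim0, fun i => i.elim0, fun i => i.elim0⟩
  | succ n IH =>
    intro M hM q
    set M' : Matrix (Fin n) (Fin n) ℝ := M.submatrix Fin.castSucc Fin.castSucc with hM'def
    have hM'nsr : NSR M' := hM.submatrix Fin.castSucc (Fin.castSucc_injective n)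
    have hEx : ∀ q' : Fin n → ℝ, ∃ x, Sol M' q' x := IH M' hM'nsr
    set col : Fin n → ℝ := fun i => M (Fin.castSucc i) (Fin.last n) with hcol
    set q' : ℝ → Fin n → ℝ := fun t => fun i => q (Fin.castSucc i) + t * col i with hq'
    set z : ℝ → Fin n → ℝ := fun t => (hEx (q' t)).choose with hzdef
    have hzsol : ∀ t, Sol M' (q' t) (z t) := fun t => (hEx (q' t)).choose_spec
    have KC : ∀ (t : ℝ) (x' : Fin n → ℝ) (i : Fin n),
        (M *ᵥ Fin.snoc x' t + q) (Fin.castSucc i) = (M' *ᵥ x' + q' t) i := by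
      intro t x' i
      have h1 : (M *ᵥ Fin.snoc x' t) (Fin.castSucc i)
          = (∑ j : Fin n, M (Fin.castSucc i) (Fin.castSucc j) * x' j)
            + M (Fin.castSucc i) (Fin.last n) * t := by
        simp [Matrix.mulVec, dotProduct, Fin.sum_univ_castSucc]
      have h2 : (M' *ᵥ x') i = ∑ j : Fin n, M (Fin.castSucc i) (Fin.castSucc j) * x' j := by
        simp [hM'def, Matrix.mulVec, dotProduct, Matrix.submatrix_apply]
      simp only [Pi.add_apply, h1, h2, hq', hcol]
      ring
    have KCl : ∀ (t : ℝ) (x' : Fin n → ℝ),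
        (M *ᵥ Fin.snoc x' t + q) (Fin.last n)
          = (∑ j : Fin n, M (Fin.last n) (Fin.castSucc j) * x' j)
            + M (Fin.last n) (Fin.last n) * t + q (Fin.last n) := by
      intro t x'
      simp [Matrix.mulVec, dotProduct, Fin.sum_univ_castSucc]
    set g : ℝ → ℝ := fun t => (M *ᵥ Fin.snoc (z t) t + q) (Fin.last n) with hgdef
    have build : ∀ t : ℝ, 0 ≤ t → 0 ≤ g t → t * g t = 0 → ∃ x, Sol M q x := by
      intro t ht hgt htg
      refine ⟨Fin.snoc (z t) t, fun i => ?_, fun i => ?_, fun i => ?_⟩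
      · refine Fin.lastCases ?_ (fun j => ?_) i
        · rw [Fin.snoc_last]; exact ht
        · rw [Fin.snoc_castSucc]; exact (hzsol t).1 j
      · refine Fin.lastCases ?_ (fun j => ?_) i
        · exact hgt
        · rw [KC]; exact (hzsol t).2.1 j
      · refine Fin.lastCases ?_ (fun j => ?_) i
        · rw [Fin.snoc_last]; exact htg
        · rw [KC, Fin.snoc_castSucc]; exact (hzsol t).2.2 j
    obtain ⟨c, hc⟩ := sol_norm_bound hM'nsr
    have hq'cont : Continuous q' := by
      apply continuous_pi
      intro i
      exact continuous_const.add (continuous_id.mul continuous_const)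
    have hzcont : Continuous z := by
      rw [continuous_iff_continuousAt]
      intro t₀
      rw [ContinuousAt, tendsto_iff_seq_tendsto]
      intro ts hts
      apply tendsto_of_subseq_tendsto
      intro ns hns
      have hqlim : Tendsto (fun j => q' (ts (ns j))) atTop (nhds (q' t₀)) :=
        (hq'cont.tendsto t₀).comp (hts.comp hns)
      have hbdd : ∃ R, ∀ j, ‖z (ts (ns j))‖ ≤ R := by
        have hnormlim : Tendsto (fun j => c * ‖q' (ts (ns j))‖) atTop (nhds (c * ‖q' t₀‖)) :=
          tendsto_const_nhds.mul (tendsto_norm.comp hqlim)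
        obtain ⟨R, hR⟩ := hnormlim.bddAbove_range
        exact ⟨R, fun j => le_trans (hc _ _ (hzsol _)) (hR (Set.mem_range_self j))⟩
      obtain ⟨R, hR⟩ := hbdd
      have hmem : ∀ j, z (ts (ns j)) ∈ Metric.closedBall (0 : Fin n → ℝ) R := by
        intro j; rw [Metric.mem_closedBall, dist_zero_right]; exact hR j
      obtain ⟨L, _, ms, hms, hLconv⟩ :=
        (isCompact_closedBall (0 : Fin n → ℝ) R).tendsto_subseq hmem
      have hLsol : Sol M' (q' t₀) L :=
        sol_lim M' hLconv (hqlim.comp hms.tendsto_atTop) (fun j => hzsol _)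
      have hLz : L = z t₀ := Sol.unique hM'nsr hLsol (hzsol t₀)
      exact ⟨ms, hLz ▸ hLconv⟩
    have hgcont : Continuous g := by
      have hgeq : g = fun t => (∑ j : Fin n, M (Fin.last n) (Fin.castSucc j) * z t j)
          + M (Fin.last n) (Fin.last n) * t + q (Fin.last n) := by
        funext t
        rw [hgdef]
        exact KCl t (z t)
      rw [hgeq]
      refine Continuous.add (Continuous.add ?_ ?_) continuous_const
      · exact continuous_finset_sum _ fun j _ =>
          continuous_const.mul ((continuous_apply j).comp hzcont)
      · exact continuous_const.mul continuous_id
    have hT : ∃ T, 0 ≤ T ∧ 0 ≤ g T := by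
      by_contra hno
      push_neg at hno
      set tk : ℕ → ℝ := fun k => (k : ℝ) + 1 with htk
      have htk0 : ∀ k, 0 ≤ tk k := fun k => by positivity
      set Z : ℕ → Fin (n + 1) → ℝ := fun k => Fin.snoc (z (tk k)) (tk k) with hZ
      set r : ℕ → ℝ := fun k => ‖Z k‖ with hr
      have hrk : ∀ k, tk k ≤ r k := by
        intro k
        have h1 : ‖Z k (Fin.last n)‖ ≤ ‖Z k‖ := norm_le_pi_norm (Z k) (Fin.last n)
        have h2 : Z k (Fin.last n) = tk k := by rw [hZ]; exact Fin.snoc_last _ _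
        rw [h2] at h1
        calc tk k = ‖tk k‖ := (Real.norm_of_nonneg (htk0 k)).symm
          _ ≤ r k := h1
      have hrpos : ∀ k, 0 < r k := fun k => lt_of_lt_of_le (by positivity) (hrk k)
      set u : ℕ → Fin (n + 1) → ℝ := fun k => (r k)⁻¹ • Z k with hu
      set p : ℕ → Fin (n + 1) → ℝ := fun k => (r k)⁻¹ • q with hp
      have humem : ∀ k, u k ∈ Metric.sphere (0 : Fin (n+1) → ℝ) 1 := by
        intro k
        rw [mem_sphere_zero_iff_norm, hu, norm_smul, norm_inv, Real.norm_of_nonneg (hrpos k).le,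
          inv_mul_cancel₀ (hrpos k).ne']
      have hZnn : ∀ k i, 0 ≤ Z k i := by
        intro k i
        refine Fin.lastCases ?_ (fun j => ?_) i
        · rw [hZ]; simpa [Fin.snoc_last] using htk0 k
        · rw [hZ]; simpa [Fin.snoc_castSucc] using (hzsol (tk k)).1 j
      have hw : ∀ k, M *ᵥ u k + p k = (r k)⁻¹ • (M *ᵥ Z k + q) := by
        intro k
        rw [hu, hp, Matrix.mulVec_smul, smul_add]
      have hp0 : Tendsto p atTop (nhds 0) := by
        have hlim : Tendsto (fun k : ℕ => ‖q‖ * (1 / ((k:ℝ)+1))) atTop (nhds 0) := by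
          have h := (tendsto_const_nhds (x := ‖q‖) (f := atTop (α := ℕ))).mul
            tendsto_one_div_add_atTop_nhds_zero_nat
          simpa using h
        refine squeeze_zero_norm' ?_ hlim
        filter_upwards with k
        rw [hp, norm_smul, norm_inv, Real.norm_of_nonneg (hrpos k).le]
        have h1 : (r k)⁻¹ ≤ (tk k)⁻¹ := by
          apply inv_anti₀ (by positivity) (hrk k)
        calc (r k)⁻¹ * ‖q‖ ≤ (tk k)⁻¹ * ‖q‖ := mul_le_mul_of_nonneg_right h1 (norm_nonneg q)
          _ = ‖q‖ * (1 / ((k:ℝ)+1)) := by rw [htk]; ring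
      have hwnn : ∀ k (i : Fin n), 0 ≤ (M *ᵥ u k + p k) (Fin.castSucc i) := by
        intro k i
        rw [hw k]
        have h2 : (M *ᵥ Z k + q) (Fin.castSucc i) = (M' *ᵥ z (tk k) + q' (tk k)) i := KC _ _ i
        show 0 ≤ (r k)⁻¹ * ((M *ᵥ Z k + q) (Fin.castSucc i))
        rw [h2]
        exact mul_nonneg (inv_nonneg.mpr (hrpos k).le) ((hzsol (tk k)).2.1 i)
      have hcompl : ∀ k (i : Fin n), u k (Fin.castSucc i) * (M *ᵥ u k + p k) (Fin.castSucc i) = 0 := by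
        intro k i
        rw [hw k]
        have h2 : (M *ᵥ Z k + q) (Fin.castSucc i) = (M' *ᵥ z (tk k) + q' (tk k)) i := KC _ _ i
        show ((r k)⁻¹ * Z k (Fin.castSucc i)) * ((r k)⁻¹ * ((M *ᵥ Z k + q) (Fin.castSucc i))) = 0
        rw [h2]
        have h3 : Z k (Fin.castSucc i) = z (tk k) i := by rw [hZ]; exact Fin.snoc_castSucc _ _ _
        rw [h3]
        have h4 := (hzsol (tk k)).2.2 i
        calc ((r k)⁻¹ * z (tk k) i) * ((r k)⁻¹ * ((M' *ᵥ z (tk k) + q' (tk k)) i))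
            = (r k)⁻¹ * (r k)⁻¹ * (z (tk k) i * ((M' *ᵥ z (tk k) + q' (tk k)) i)) := by ring
          _ = 0 := by rw [h4, mul_zero]
      have hlastle : ∀ k, (M *ᵥ u k + p k) (Fin.last n) ≤ 0 := by
        intro k
        rw [hw k]
        show (r k)⁻¹ * ((M *ᵥ Z k + q) (Fin.last n)) ≤ 0
        have h5 : (M *ᵥ Z k + q) (Fin.last n) = g (tk k) := by rw [hgdef]
        rw [h5]
        exact mul_nonpos_of_nonneg_of_nonpos (inv_nonneg.mpr (hrpos k).le) (hno (tk k) (htk0 k)).le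
      obtain ⟨U, hUmem, φ, hφ, hconv⟩ :=
        (isCompact_sphere (0 : Fin (n+1) → ℝ) 1).tendsto_subseq humem
      have hpφ : Tendsto (fun j => p (φ j)) atTop (nhds 0) := hp0.comp hφ.tendsto_atTop
      have hwlim : ∀ i, Tendsto (fun j => (M *ᵥ u (φ j) + p (φ j)) i) atTop
          (nhds ((M *ᵥ U + 0) i)) := fun i => tendsto_w M hconv hpφ i
      have hUnn : ∀ i, 0 ≤ U i := by
        intro i
        refine ge_of_tendsto' (tendsto_comp_apply hconv i) fun j => ?_
        show 0 ≤ (r (φ j))⁻¹ * Z (φ j) i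
        exact mul_nonneg (inv_nonneg.mpr (hrpos _).le) (hZnn _ i)
      have hUcompl : ∀ i : Fin n, U (Fin.castSucc i) * (M *ᵥ U + 0) (Fin.castSucc i) = 0 := by
        intro i
        refine tendsto_nhds_unique
          ((tendsto_comp_apply hconv (Fin.castSucc i)).mul (hwlim (Fin.castSucc i))) ?_
        exact Tendsto.congr (fun j => (hcompl (φ j) i).symm) tendsto_const_nhds
      have hUlast : (M *ᵥ U + 0) (Fin.last n) ≤ 0 :=
        le_of_tendsto' (hwlim (Fin.last n)) fun j => hlastle (φ j)
      have hUne : U ≠ 0 := by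
        intro h
        rw [mem_sphere_zero_iff_norm, h, norm_zero] at hUmem
        exact one_ne_zero hUmem.symm
      obtain ⟨i, hi⟩ := hM U hUne
      have haz : M *ᵥ U + 0 = M *ᵥ U := add_zero _
      rw [haz] at hUcompl hUlast
      revert hi
      refine Fin.lastCases ?_ (fun j => ?_) i
      · intro hi
        nlinarith [hUnn (Fin.last n), hUlast]
      · intro hi
        rw [hUcompl j] at hi
        exact lt_irrefl 0 hi
    rcases le_or_gt 0 (g 0) with h0 | h0
    · exact build 0 le_rfl h0 (zero_mul _)
    · obtain ⟨T, hT0, hgT⟩ := hT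
      have hmem : (0:ℝ) ∈ Set.Icc (g 0) (g T) := ⟨h0.le, hgT⟩
      obtain ⟨t, htI, hgt⟩ := intermediate_value_Icc hT0 hgcont.continuousOn hmem
      exact build t htI.1 hgt.ge (by rw [hgt, mul_zero])

theorem lcp_unique_iff_nsr {n : ℕ} (M : Matrix (Fin n) (Fin n) ℝ) :
    (∀ q : Fin n → ℝ, ∃! z, Sol M q z) ↔ NSR M := by
  constructor
  · intro h
    by_contra hn
    unfold NSR at hn
    push_neg at hn
    obtain ⟨x, hx0, hx⟩ := hn
    set w : Fin n → ℝ := M *ᵥ x with hw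
    set z1 : Fin n → ℝ := fun i => max (x i) 0 with hz1
    set z2 : Fin n → ℝ := fun i => max (-x i) 0 with hz2
    have hz12 : z1 - z2 = x := by
      funext i
      show max (x i) 0 - max (-x i) 0 = x i
      rcases le_total (x i) 0 with h' | h'
      · rw [max_eq_right h', max_eq_left (neg_nonneg.mpr h')]; ring
      · rw [max_eq_left h', max_eq_right (neg_nonpos.mpr h')]; ring
    set q : Fin n → ℝ := (fun i => max (w i) 0) - M *ᵥ z1 with hq
    have hw1 : M *ᵥ z1 + q = fun i => max (w i) 0 := by
      rw [hq]; funext i; simp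
    have hw2 : M *ᵥ z2 + q = fun i => max (w i) 0 - w i := by
      funext i
      have : (M *ᵥ z2) i = (M *ᵥ z1) i - w i := by
        rw [hw, ← hz12, Matrix.mulVec_sub]
        simp
      rw [hq]
      simp only [Pi.add_apply, Pi.sub_apply, this]
      ring
    have hsol1 : Sol M q z1 := by
      refine ⟨fun i => le_max_right _ _, fun i => ?_, fun i => ?_⟩
      · rw [hw1]; exact le_max_right _ _
      · rw [hw1]
        show max (x i) 0 * max (w i) 0 = 0
        rcases lt_or_ge 0 (x i) with h' | h'
        · have hwi : w i ≤ 0 := by nlinarith [hx i]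
          rw [max_eq_right hwi, mul_zero]
        · rw [max_eq_right h', zero_mul]
    have hsol2 : Sol M q z2 := by
      refine ⟨fun i => le_max_right _ _, fun i => ?_, fun i => ?_⟩
      · rw [hw2]
        show (0:ℝ) ≤ max (w i) 0 - w i
        have := le_max_left (w i) 0
        linarith
      · rw [hw2]
        show max (-x i) 0 * (max (w i) 0 - w i) = 0
        rcases lt_or_ge (x i) 0 with h' | h'
        · have hwi : 0 ≤ w i := by nlinarith [hx i]
          rw [max_eq_left hwi]
          ring
        · rw [max_eq_right (neg_nonpos.mpr h'), zero_mul]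
    have heq : z1 = z2 := by
      obtain ⟨zz, _, huniq⟩ := h q
      rw [huniq z1 hsol1, huniq z2 hsol2]
    apply hx0
    funext i
    have := congrFun heq i
    show x i = 0
    by_contra hxi
    rcases lt_or_ge (x i) 0 with h' | h'
    · rw [show z1 i = max (x i) 0 from rfl, show z2 i = max (-x i) 0 from rfl] at this
      rw [max_eq_right h'.le, max_eq_left (neg_nonneg.mpr h'.le)] at this
      linarith
    · have h'' : 0 < x i := lt_of_le_of_ne h' (Ne.symm hxi)
      rw [show z1 i = max (x i) 0 from rfl, show z2 i = max (-x i) 0 from rfl] at this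
      rw [max_eq_left h''.le, max_eq_right (neg_nonpos.mpr h''.le)] at this
      linarith
  · intro hM q
    obtain ⟨x, hx⟩ := nsr_exists n M hM q
    exact ⟨x, hx, fun y hy => Sol.unique hM hy hx⟩

theorem gave_transfer {n : ℕ} (A B : Matrix (Fin n) (Fin n) ℝ) (hAB : IsUnit (A + B)) :
    (∀ b : Fin n → ℝ, ∃! x : Fin n → ℝ, A *ᵥ x + B *ᵥ |x| = b) ↔
      (∀ q : Fin n → ℝ, ∃! z, Sol ((A + B)⁻¹ * (A - B)) q z) := by
  set S : Matrix (Fin n) (Fin n) ℝ := A + B with hS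
  set M : Matrix (Fin n) (Fin n) ℝ := S⁻¹ * (A - B) with hM
  have hdet : IsUnit S.det := (Matrix.isUnit_iff_isUnit_det S).mp hAB
  have hSS : S⁻¹ * S = 1 := Matrix.nonsing_inv_mul S hdet
  have hSS' : S * S⁻¹ = 1 := Matrix.mul_nonsing_inv S hdet
  have hSM : S * M = A - B := by
    rw [hM, ← Matrix.mul_assoc, hSS', Matrix.one_mul]
  have hSinv : ∀ v : Fin n → ℝ, S⁻¹ *ᵥ (S *ᵥ v) = v := by
    intro v; rw [Matrix.mulVec_mulVec, hSS, Matrix.one_mulVec]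
  have hSinv' : ∀ v : Fin n → ℝ, S *ᵥ (S⁻¹ *ᵥ v) = v := by
    intro v; rw [Matrix.mulVec_mulVec, hSS', Matrix.one_mulVec]
  set pp : (Fin n → ℝ) → Fin n → ℝ := fun x i => max (x i) 0 with hpp
  set np : (Fin n → ℝ) → Fin n → ℝ := fun x i => max (-x i) 0 with hnp
  have hppnn : ∀ x i, 0 ≤ pp x i := fun x i => le_max_right _ _
  have hnpnn : ∀ x i, 0 ≤ np x i := fun x i => le_max_right _ _
  have hsub : ∀ x : Fin n → ℝ, ∀ i, x i = pp x i - np x i := by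
    intro x i
    show x i = max (x i) 0 - max (-x i) 0
    rcases le_total (x i) 0 with h' | h'
    · rw [max_eq_right h', max_eq_left (neg_nonneg.mpr h')]; ring
    · rw [max_eq_left h', max_eq_right (neg_nonpos.mpr h')]; ring
  have habs : ∀ x : Fin n → ℝ, ∀ i, |x| i = pp x i + np x i := by
    intro x i
    show |x i| = max (x i) 0 + max (-x i) 0
    rcases le_total (x i) 0 with h' | h'
    · rw [abs_of_nonpos h', max_eq_right h', max_eq_left (neg_nonneg.mpr h')]; ring
    · rw [abs_of_nonneg h', max_eq_left h', max_eq_right (neg_nonpos.mpr h')]; ring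
  have hprod : ∀ x : Fin n → ℝ, ∀ i, pp x i * np x i = 0 := by
    intro x i
    show max (x i) 0 * max (-x i) 0 = 0
    rcases le_total (x i) 0 with h' | h'
    · rw [max_eq_right h', zero_mul]
    · rw [max_eq_right (neg_nonpos.mpr h'), mul_zero]
  have hSPLIT : ∀ u v : Fin n → ℝ, A *ᵥ (u - v) + B *ᵥ (u + v) = S *ᵥ u - (A - B) *ᵥ v := by
    intro u v
    funext i
    show (A *ᵥ (u - v)) i + (B *ᵥ (u + v)) i = (S *ᵥ u) i - ((A - B) *ᵥ v) i
    simp only [Matrix.mulVec, dotProduct, hS, Matrix.add_apply, Matrix.sub_apply]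
    rw [← Finset.sum_sub_distrib, ← Finset.sum_add_distrib]
    refine Finset.sum_congr rfl fun j _ => ?_
    simp only [Pi.add_apply, Pi.sub_apply]
    ring
  have hLHS : ∀ x : Fin n → ℝ, A *ᵥ x + B *ᵥ |x| = S *ᵥ (pp x) - (A - B) *ᵥ (np x) := by
    intro x
    have h1 : x = pp x - np x := by funext i; rw [Pi.sub_apply]; exact hsub x i
    have h2 : |x| = pp x + np x := by funext i; rw [Pi.add_apply]; exact habs x i
    calc A *ᵥ x + B *ᵥ |x| = A *ᵥ (pp x - np x) + B *ᵥ (pp x + np x) := by rw [← h1, ← h2]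
      _ = S *ᵥ (pp x) - (A - B) *ᵥ (np x) := hSPLIT _ _
  -- forward map: a GAVE solution gives an LCP solution
  have fwd : ∀ (b : Fin n → ℝ) (x : Fin n → ℝ), A *ᵥ x + B *ᵥ |x| = b →
      (M *ᵥ (np x) + S⁻¹ *ᵥ b = pp x) ∧ Sol M (S⁻¹ *ᵥ b) (np x) := by
    intro b x hx
    have h1 : S *ᵥ (pp x) = (A - B) *ᵥ (np x) + b := by
      rw [hLHS x] at hx
      funext i
      have := congrFun hx i
      simp only [Pi.sub_apply] at this
      simp only [Pi.add_apply]
      linarith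
    have h2 : M *ᵥ (np x) + S⁻¹ *ᵥ b = pp x := by
      have h2' : S⁻¹ *ᵥ (S *ᵥ pp x) = S⁻¹ *ᵥ ((A - B) *ᵥ np x + b) := by rw [h1]
      rw [hSinv, Matrix.mulVec_add, Matrix.mulVec_mulVec, ← hM] at h2'
      exact h2'.symm
    refine ⟨h2, fun i => hnpnn x i, fun i => ?_, fun i => ?_⟩
    · rw [h2]; exact hppnn x i
    · rw [h2]
      rw [mul_comm]
      exact hprod x i
  -- backward map: an LCP solution gives a GAVE solution
  have bwd : ∀ (q z : Fin n → ℝ), Sol M q z →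
      A *ᵥ ((M *ᵥ z + q) - z) + B *ᵥ |(M *ᵥ z + q) - z| = S *ᵥ q := by
    intro q z hz
    set u : Fin n → ℝ := M *ᵥ z + q with hu
    have habs2 : |u - z| = u + z := by
      funext i
      rw [Pi.abs_apply, Pi.sub_apply, Pi.add_apply]
      rcases mul_eq_zero.mp (hz.2.2 i) with h' | h'
      · rw [show z i = 0 from h']
        rw [sub_zero, add_zero]
        exact abs_of_nonneg (hz.2.1 i)
      · rw [show u i = 0 from h']
        rw [zero_sub, zero_add, abs_neg]
        exact abs_of_nonneg (hz.1 i)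
    rw [habs2, hSPLIT u z, hu, Matrix.mulVec_add, Matrix.mulVec_mulVec, hSM]
    abel
  -- recovery identities
  have recz : ∀ q z : Fin n → ℝ, Sol M q z → np ((M *ᵥ z + q) - z) = z := by
    intro q z hz
    funext i
    show max (-((M *ᵥ z + q) i - z i)) 0 = z i
    rcases mul_eq_zero.mp (hz.2.2 i) with h' | h'
    · rw [show z i = 0 from h']
      rw [sub_zero]
      rw [max_eq_right (neg_nonpos.mpr (hz.2.1 i))]
    · rw [show (M *ᵥ z + q) i = 0 from h']
      rw [zero_sub, neg_neg, max_eq_left (hz.1 i)]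
  constructor
  · intro h q
    obtain ⟨x, hx, huniq⟩ := h (S *ᵥ q)
    obtain ⟨hx2, hxsol⟩ := fwd (S *ᵥ q) x hx
    rw [hSinv] at hx2 hxsol
    refine ⟨np x, hxsol, ?_⟩
    intro z hzsol
    have hXz : A *ᵥ ((M *ᵥ z + q) - z) + B *ᵥ |(M *ᵥ z + q) - z| = S *ᵥ q := bwd q z hzsol
    have hxe : (M *ᵥ z + q) - z = x := huniq _ hXz
    calc z = np ((M *ᵥ z + q) - z) := (recz q z hzsol).symm
      _ = np x := by rw [hxe]
  · intro h b
    obtain ⟨z, hzsol, huniq⟩ := h (S⁻¹ *ᵥ b)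
    refine ⟨(M *ᵥ z + S⁻¹ *ᵥ b) - z, ?_, ?_⟩
    · have := bwd (S⁻¹ *ᵥ b) z hzsol
      rw [hSinv'] at this
      exact this
    · intro x hx
      obtain ⟨hx2, hxsol⟩ := fwd b x hx
      have hze : np x = z := huniq _ hxsol
      calc x = (fun i => pp x i - np x i) := by funext i; exact hsub x i
        _ = (M *ᵥ z + S⁻¹ *ᵥ b) - z := by
            funext i
            rw [Pi.sub_apply, Pi.add_apply, ← hze, ← hx2]
            simp

theorem stmt4 {n : ℕ} (A B : Matrix (Fin n) (Fin n) ℝ) (hAB : IsUnit (A + B)) :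
    (∀ b : Fin n → ℝ, ∃! x : Fin n → ℝ, A *ᵥ x + B *ᵥ |x| = b) ↔
      IsPMatrix ((A + B)⁻¹ * (A - B)) := by
  rw [gave_transfer A B hAB, lcp_unique_iff_nsr]
  exact ⟨isPMatrix_of_nsr, nsr_of_isPMatrix⟩
end

section
/- Let A, B ∈ ℝ^{n×n}. The GAVE Ax + B|x| = b has a unique solution for every b ∈ ℝ^n if and only if the matrix A + B·D̄ is nonsingular for every diagonal matrix D̄ = diag(d̄_i) with d̄_i ∈ [−1, 1]. -/
open Matrix

open Matrix

lemma gave_absd {n : ℕ} (x y : Fin n → ℝ) :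
    ∃ d : Fin n → ℝ, (∀ i, |d i| ≤ 1) ∧ ∀ i, |x i| - |y i| = d i * (x i - y i) := by
  refine ⟨fun i => if h : x i = y i then 0 else (|x i| - |y i|) / (x i - y i), fun i => ?_, fun i => ?_⟩
  · by_cases h : x i = y i
    · simp [h]
    · have hne : x i - y i ≠ 0 := sub_ne_zero.mpr h
      show |if h : x i = y i then (0:ℝ) else (|x i| - |y i|) / (x i - y i)| ≤ 1
      rw [dif_neg h, abs_div, div_le_one (abs_pos.mpr hne)]
      exact abs_abs_sub_abs_le_abs_sub _ _
  · by_cases h : x i = y i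
    · simp [h]
    · have hne : x i - y i ≠ 0 := sub_ne_zero.mpr h
      simp only [dif_neg h]
      exact (div_mul_cancel₀ _ hne).symm

lemma gave_diagmul {n : ℕ} (d v : Fin n → ℝ) : Matrix.diagonal d *ᵥ v = d * v := by
  funext i; simp [Matrix.mulVec_diagonal]

lemma gave_key {n : ℕ} (A B : Matrix (Fin n) (Fin n) ℝ) (d v : Fin n → ℝ) :
    (A + B * Matrix.diagonal d) *ᵥ v = A *ᵥ v + B *ᵥ (d * v) := by
  rw [Matrix.add_mulVec, ← Matrix.mulVec_mulVec, gave_diagmul]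

lemma gave_cancel {n : ℕ} (M : Matrix (Fin n) (Fin n) ℝ) (h : IsUnit M) (v : Fin n → ℝ)
    (hv : M *ᵥ v = 0) : v = 0 := by
  obtain ⟨N, hN⟩ := h.exists_left_inv
  calc v = (N * M) *ᵥ v := by rw [hN, Matrix.one_mulVec]
  _ = N *ᵥ (M *ᵥ v) := by rw [Matrix.mulVec_mulVec]
  _ = 0 := by rw [hv, Matrix.mulVec_zero]

lemma gave_diff {n : ℕ} (S : Finset (Fin n)) (x y : Fin n → ℝ) :
    ∃ d : Fin n → ℝ, (∀ i, |d i| ≤ 1) ∧ (∀ i ∉ S, d i = 0) ∧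
      ((fun i => if i ∈ S then |x i| else 0) - fun i => if i ∈ S then |y i| else 0)
        = d * (x - y) := by
  obtain ⟨d, hd1, hd2⟩ := gave_absd x y
  refine ⟨fun i => if i ∈ S then d i else 0, fun i => ?_, fun i hi => by simp [hi], ?_⟩
  · by_cases h : i ∈ S <;> simp [h, hd1 i]
  · funext i
    by_cases h : i ∈ S <;> simp [h, hd2 i]

lemma gave_bound {n : ℕ} (S : Finset (Fin n)) (A B : Matrix (Fin n) (Fin n) ℝ)
    (h : ∀ d : Fin n → ℝ, (∀ i, |d i| ≤ 1) → (∀ i ∉ S, d i = 0) →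
      IsUnit (A + B * Matrix.diagonal d)) :
    ∃ c > 0, ∀ d : Fin n → ℝ, (∀ i, |d i| ≤ 1) → (∀ i ∉ S, d i = 0) →
      ∀ v : Fin n → ℝ, c * ‖v‖ ≤ ‖(A + B * Matrix.diagonal d) *ᵥ v‖ := by
  classical
  rcases Nat.eq_zero_or_pos n with hn | hn
  · refine ⟨1, one_pos, fun d _ _ v => ?_⟩
    subst hn
    have : v = 0 := Subsingleton.elim _ _
    simp [this]
  · haveI : Nonempty (Fin n) := Fin.pos_iff_nonempty.mp hn
    set Kd : Set (Fin n → ℝ) := Set.univ.pi fun i => if i ∈ S then Set.Icc (-1:ℝ) 1 else {0}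
      with hKd
    have hKdmem : ∀ d : Fin n → ℝ, d ∈ Kd ↔ ((∀ i, |d i| ≤ 1) ∧ ∀ i ∉ S, d i = 0) := by
      intro d
      constructor
      · intro hd
        constructor
        · intro i
          have := hd i (Set.mem_univ i)
          by_cases hi : i ∈ S
          · simp only [hi, if_true] at this; exact abs_le.mpr this
          · simp only [hi, if_false, Set.mem_singleton_iff] at this; simp [this]
        · intro i hi
          have := hd i (Set.mem_univ i)
          simpa [hi] using this
      · rintro ⟨h1, h2⟩ i _
        by_cases hi : i ∈ S
        · simp only [hi, if_true]; exact abs_le.mp (h1 i)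
        · simp [hi, h2 i hi]
    have hKdc : IsCompact Kd := isCompact_univ_pi fun i => by
      by_cases hi : i ∈ S <;> simp [hi, isCompact_Icc, isCompact_singleton]
    set T := Kd ×ˢ Metric.sphere (0 : Fin n → ℝ) 1 with hT
    have hTc : IsCompact T := hKdc.prod (isCompact_sphere 0 1)
    have hTne : T.Nonempty := by
      obtain ⟨u, hu⟩ : (Metric.sphere (0 : Fin n → ℝ) 1).Nonempty :=
        NormedSpace.sphere_nonempty.2 zero_le_one
      exact ⟨(0, u), (hKdmem 0).mpr ⟨by simp, by simp⟩, hu⟩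
    have hf : Continuous (fun p : (Fin n → ℝ) × (Fin n → ℝ) =>
        ‖(A + B * Matrix.diagonal p.1) *ᵥ p.2‖) := by
      apply Continuous.norm
      apply continuous_pi
      intro i
      have : (fun p : (Fin n → ℝ) × (Fin n → ℝ) => ((A + B * Matrix.diagonal p.1) *ᵥ p.2) i)
          = fun p => ∑ k, (A i k + B i k * p.1 k) * p.2 k := by
        funext p
        simp [Matrix.mulVec, dotProduct, Matrix.add_apply, Matrix.mul_apply,
          Matrix.diagonal, Finset.mul_sum, Finset.sum_mul]
      rw [this]
      fun_prop
    obtain ⟨p₀, hp₀T, hmin⟩ := hTc.exists_isMinOn hTne hf.continuousOn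
    set c := ‖(A + B * Matrix.diagonal p₀.1) *ᵥ p₀.2‖ with hc
    have hp₀K : p₀.1 ∈ Kd := hp₀T.1
    have hp₀s : ‖p₀.2‖ = 1 := by simpa using hp₀T.2
    have hcpos : 0 < c := by
      rw [hc, norm_pos_iff]
      intro h0
      have hu := (hKdmem p₀.1).mp hp₀K
      have := gave_cancel _ (h p₀.1 hu.1 hu.2) _ h0
      rw [this] at hp₀s
      simp at hp₀s
    refine ⟨c, hcpos, fun d hd1 hd2 v => ?_⟩
    by_cases hv : v = 0
    · simp [hv]
    · have hvn : ‖v‖ ≠ 0 := norm_ne_zero_iff.mpr hv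
      have hsph : (‖v‖⁻¹ • v) ∈ Metric.sphere (0 : Fin n → ℝ) 1 := by
        simp [norm_smul, abs_of_nonneg (norm_nonneg v), inv_mul_cancel₀ hvn]
      have hmem : (d, ‖v‖⁻¹ • v) ∈ T := ⟨(hKdmem d).mpr ⟨hd1, hd2⟩, hsph⟩
      have this : c ≤ ‖(A + B * Matrix.diagonal d) *ᵥ (‖v‖⁻¹ • v)‖ :=
        isMinOn_iff.mp hmin (d, ‖v‖⁻¹ • v) hmem
      have heq : (A + B * Matrix.diagonal d) *ᵥ (‖v‖⁻¹ • v)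
          = ‖v‖⁻¹ • ((A + B * Matrix.diagonal d) *ᵥ v) := Matrix.mulVec_smul _ _ _
      rw [heq, norm_smul, Real.norm_eq_abs, abs_of_nonneg (inv_nonneg.mpr (norm_nonneg v))] at this
      calc c * ‖v‖ ≤ (‖v‖⁻¹ * ‖(A + B * Matrix.diagonal d) *ᵥ v‖) * ‖v‖ := by
            apply mul_le_mul_of_nonneg_right this (norm_nonneg v)
      _ = ‖(A + B * Matrix.diagonal d) *ᵥ v‖ := by
            field_simp

lemma gave_exists {n : ℕ} (S : Finset (Fin n)) :
    ∀ A : Matrix (Fin n) (Fin n) ℝ, ∀ B : Matrix (Fin n) (Fin n) ℝ,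
      (∀ d : Fin n → ℝ, (∀ i, |d i| ≤ 1) → (∀ i ∉ S, d i = 0) →
        IsUnit (A + B * Matrix.diagonal d)) →
      ∀ b : Fin n → ℝ, ∃ x : Fin n → ℝ,
        A *ᵥ x + B *ᵥ (fun i => if i ∈ S then |x i| else 0) = b := by
  classical
  induction S using Finset.induction_on with
  | empty =>
    intro A B h b
    have hA : IsUnit A := by
      have := h 0 (by simp) (by simp)
      have hd0 : Matrix.diagonal (0 : Fin n → ℝ) = (0 : Matrix (Fin n) (Fin n) ℝ) := by
        ext i k
        by_cases hik : i = k <;> simp [Matrix.diagonal_apply, hik]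
      rwa [hd0, mul_zero, add_zero] at this
    have hdet : IsUnit A.det := (Matrix.isUnit_iff_isUnit_det A).mp hA
    refine ⟨A⁻¹ *ᵥ b, ?_⟩
    have : (fun i : Fin n => if i ∈ (∅ : Finset (Fin n)) then |(A⁻¹ *ᵥ b) i| else 0) = 0 := by
      funext i; simp
    rw [this, Matrix.mulVec_zero, add_zero, Matrix.mulVec_mulVec, Matrix.mul_nonsing_inv _ hdet,
      Matrix.one_mulVec]
  | @insert j S₀ hj IH =>
    intro A B h b
    obtain ⟨c, hc, hcb⟩ := gave_bound (insert j S₀) A B h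
    set L := LinearMap.toContinuousLinearMap (Matrix.mulVecLin B) with hL
    have hLb : ∀ w, ‖B *ᵥ w‖ ≤ ‖L‖ * ‖w‖ := fun w => L.le_opNorm w
    -- the one-parameter family of coefficient vectors
    set ej : ℝ → (Fin n → ℝ) := fun t i => if i = j then t else 0 with hej
    -- properties of combined coefficient vectors
    have hcomb : ∀ t : ℝ, |t| ≤ 1 → ∀ d : Fin n → ℝ, (∀ i, |d i| ≤ 1) → (∀ i ∉ S₀, d i = 0) →
        (∀ i, |(ej t + d) i| ≤ 1) ∧ (∀ i ∉ insert j S₀, (ej t + d) i = 0) := by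
      intro t ht d hd1 hd2
      constructor
      · intro i
        by_cases hij : i = j
        · subst hij
          simp [hej, hd2 i hj, ht]
        · simp [hej, hij, hd1 i]
      · intro i hi
        have hij : i ≠ j := fun hh => hi (hh ▸ Finset.mem_insert_self j S₀)
        have hiS : i ∉ S₀ := fun hh => hi (Finset.mem_insert_of_mem hh)
        simp [hej, hij, hd2 i hiS]
    -- the matrix family identity
    have hmat : ∀ t : ℝ, ∀ d : Fin n → ℝ,
        A + B * Matrix.diagonal (ej t) + B * Matrix.diagonal d
          = A + B * Matrix.diagonal (ej t + d) := by
      intro t d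
      rw [add_assoc, ← mul_add, Matrix.diagonal_add]
      rfl
    -- solvability of the reduced problems
    have hsol : ∀ t : ℝ, |t| ≤ 1 → ∃ x : Fin n → ℝ,
        (A + B * Matrix.diagonal (ej t)) *ᵥ x
          + B *ᵥ (fun i => if i ∈ S₀ then |x i| else 0) = b := by
      intro t ht
      refine IH (A + B * Matrix.diagonal (ej t)) B ?_ b
      intro d hd1 hd2
      rw [hmat t d]
      exact h _ (hcomb t ht d hd1 hd2).1 (hcomb t ht d hd1 hd2).2
    -- choose solutions
    have hsol' : ∀ t : ℝ, ∃ x : Fin n → ℝ, |t| ≤ 1 →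
        (A + B * Matrix.diagonal (ej t)) *ᵥ x
          + B *ᵥ (fun i => if i ∈ S₀ then |x i| else 0) = b := by
      intro t
      by_cases ht : |t| ≤ 1
      · exact ⟨(hsol t ht).choose, fun _ => (hsol t ht).choose_spec⟩
      · exact ⟨0, fun h' => absurd h' ht⟩
    choose xt hxt using hsol'
    -- key difference estimate
    have hGdiff : ∀ t : ℝ, |t| ≤ 1 → ∀ u v : Fin n → ℝ,
        c * ‖u - v‖ ≤ ‖((A + B * Matrix.diagonal (ej t)) *ᵥ u
            + B *ᵥ (fun i => if i ∈ S₀ then |u i| else 0))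
          - ((A + B * Matrix.diagonal (ej t)) *ᵥ v
            + B *ᵥ (fun i => if i ∈ S₀ then |v i| else 0))‖ := by
      intro t ht u v
      obtain ⟨d, hd1, hd2, hd3⟩ := gave_diff S₀ u v
      have key : ((A + B * Matrix.diagonal (ej t)) *ᵥ u
            + B *ᵥ (fun i => if i ∈ S₀ then |u i| else 0))
          - ((A + B * Matrix.diagonal (ej t)) *ᵥ v
            + B *ᵥ (fun i => if i ∈ S₀ then |v i| else 0))
          = (A + B * Matrix.diagonal (ej t + d)) *ᵥ (u - v) := by
        rw [← hmat t d, Matrix.add_mulVec ((A + B * Matrix.diagonal (ej t))) _ (u - v),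
          ← Matrix.mulVec_mulVec, gave_diagmul, ← hd3]
        rw [Matrix.mulVec_sub, Matrix.mulVec_sub]
        abel
      rw [key]
      exact hcb _ (hcomb t ht d hd1 hd2).1 (hcomb t ht d hd1 hd2).2 (u - v)
    -- bound on solutions
    have hzero : ∀ t : ℝ, (A + B * Matrix.diagonal (ej t)) *ᵥ (0 : Fin n → ℝ)
        + B *ᵥ (fun i => if i ∈ S₀ then |(0 : Fin n → ℝ) i| else 0) = 0 := by
      intro t
      have : (fun i => if i ∈ S₀ then |(0 : Fin n → ℝ) i| else 0) = (0 : Fin n → ℝ) := by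
        funext i; simp
      rw [this, Matrix.mulVec_zero, Matrix.mulVec_zero, add_zero]
    have hxtb : ∀ t : ℝ, |t| ≤ 1 → ‖xt t‖ ≤ c⁻¹ * ‖b‖ := by
      intro t ht
      have h1 := hGdiff t ht (xt t) 0
      rw [hzero t, sub_zero, sub_zero, hxt t ht] at h1
      rw [inv_mul_eq_div, le_div_iff₀ hc, mul_comm]
      exact h1
    -- Lipschitz estimate for t ↦ xt t
    have hlip : ∀ s t : ℝ, |s| ≤ 1 → |t| ≤ 1 →
        ‖xt t - xt s‖ ≤ (c⁻¹ * (‖L‖ * (c⁻¹ * ‖b‖))) * |t - s| := by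
      intro s t hs ht
      have h1 := hGdiff t ht (xt t) (xt s)
      rw [hxt t ht] at h1
      -- compute b - G t (xt s) = G s (xt s) - G t (xt s)
      have h2 : b - ((A + B * Matrix.diagonal (ej t)) *ᵥ (xt s)
            + B *ᵥ (fun i => if i ∈ S₀ then |(xt s) i| else 0))
          = B *ᵥ ((ej s - ej t) * xt s) := by
        rw [← hxt s hs]
        have e1 : ∀ r : ℝ, (A + B * Matrix.diagonal (ej r)) *ᵥ (xt s)
            = A *ᵥ (xt s) + B *ᵥ (ej r * xt s) := fun r => gave_key A B (ej r) (xt s)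
        rw [e1 s, e1 t]
        have e2 : (ej s - ej t) * xt s = ej s * xt s - ej t * xt s := by
          funext i; simp [sub_mul]
        rw [e2, Matrix.mulVec_sub]
        abel
      rw [h2] at h1
      have h3 : ‖(ej s - ej t) * xt s‖ ≤ |t - s| * ‖xt s‖ := by
        apply (pi_norm_le_iff_of_nonneg (by positivity)).2
        intro i
        by_cases hij : i = j
        · subst hij
          have : ((ej s - ej t) * xt s) i = (s - t) * xt s i := by
            simp [hej]
          rw [this, Real.norm_eq_abs, abs_mul]
          have := norm_le_pi_norm (xt s) i
          rw [Real.norm_eq_abs] at this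
          have habs : |s - t| = |t - s| := abs_sub_comm s t
          calc |s - t| * |xt s i| ≤ |s - t| * ‖xt s‖ :=
                mul_le_mul_of_nonneg_left this (abs_nonneg _)
          _ = |t - s| * ‖xt s‖ := by rw [habs]
        · have : ((ej s - ej t) * xt s) i = 0 := by simp [hej, hij]
          rw [this]
          simp
          positivity
      have h4 : ‖B *ᵥ ((ej s - ej t) * xt s)‖ ≤ ‖L‖ * (|t - s| * ‖xt s‖) :=
        le_trans (hLb _) (mul_le_mul_of_nonneg_left h3 (norm_nonneg L))
      have h5 : c * ‖xt t - xt s‖ ≤ ‖L‖ * (|t - s| * ‖xt s‖) := le_trans h1 h4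
      have h6 : ‖xt s‖ ≤ c⁻¹ * ‖b‖ := hxtb s hs
      have h7 : c * ‖xt t - xt s‖ ≤ ‖L‖ * (|t - s| * (c⁻¹ * ‖b‖)) := by
        refine le_trans h5 ?_
        apply mul_le_mul_of_nonneg_left _ (norm_nonneg L)
        exact mul_le_mul_of_nonneg_left h6 (abs_nonneg _)
      rw [← le_div_iff₀' hc] at h7
      refine le_trans h7 (le_of_eq ?_)
      field_simp
    -- continuity
    have hcont : ContinuousOn (fun t => xt t) (Set.Icc (-1 : ℝ) 1) := by
      set Kc : NNReal := Real.toNNReal (c⁻¹ * (‖L‖ * (c⁻¹ * ‖b‖))) with hKc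
      apply LipschitzOnWith.continuousOn (K := Kc)
      apply LipschitzOnWith.of_dist_le_mul
      intro s hs t ht
      rw [dist_eq_norm, dist_eq_norm]
      have := hlip t s (abs_le.mpr (Set.mem_Icc.mp ht)) (abs_le.mpr (Set.mem_Icc.mp hs))
      refine le_trans this ?_
      rw [hKc, Real.coe_toNNReal _ (by positivity)]
      exact le_of_eq rfl
    have hpsi : ContinuousOn (fun t => xt t j) (Set.Icc (-1 : ℝ) 1) :=
      (continuous_apply j).comp_continuousOn hcont
    -- final assembly: helper to rewrite the full equation
    have hfull : ∀ t : ℝ, ∀ x : Fin n → ℝ,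
        (ej t * x + fun i => if i ∈ S₀ then |x i| else 0)
            = (fun i => if i ∈ insert j S₀ then |x i| else 0) →
        ((A + B * Matrix.diagonal (ej t)) *ᵥ x
          + B *ᵥ (fun i => if i ∈ S₀ then |x i| else 0) = b) →
        A *ᵥ x + B *ᵥ (fun i => if i ∈ insert j S₀ then |x i| else 0) = b := by
      intro t x habs heq
      rw [gave_key, add_assoc, ← Matrix.mulVec_add, habs] at heq
      exact heq
    by_cases h1 : 0 ≤ xt 1 j
    · refine ⟨xt 1, hfull 1 (xt 1) ?_ (hxt 1 (by norm_num))⟩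
      funext i
      by_cases hij : i = j
      · subst hij
        simp [hej, hj, abs_of_nonneg h1]
      · simp [hej, hij, Finset.mem_insert]
    · by_cases h2 : xt (-1) j ≤ 0
      · refine ⟨xt (-1), hfull (-1) (xt (-1)) ?_ (hxt (-1) (by norm_num))⟩
        funext i
        by_cases hij : i = j
        · subst hij
          simp [hej, hj, abs_of_nonpos h2]
        · simp [hej, hij, Finset.mem_insert]
      · -- IVT
        push_neg at h1 h2
        have hIcc : (0:ℝ) ∈ Set.Icc (xt 1 j) (xt (-1) j) := ⟨le_of_lt h1, le_of_lt h2⟩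
        obtain ⟨t₀, ht₀, ht₀0⟩ := intermediate_value_Icc' (by norm_num : (-1:ℝ) ≤ 1) hpsi hIcc
        have ht₀1 : |t₀| ≤ 1 := abs_le.mpr (Set.mem_Icc.mp ht₀)
        refine ⟨xt t₀, hfull t₀ (xt t₀) ?_ (hxt t₀ ht₀1)⟩
        funext i
        by_cases hij : i = j
        · subst hij
          have ht₀0' : xt t₀ i = 0 := ht₀0
          simp [hej, hj, ht₀0']
        · simp [hej, hij, Finset.mem_insert]

lemma gave_inj {n : ℕ} (A B : Matrix (Fin n) (Fin n) ℝ)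
    (h : ∀ d : Fin n → ℝ, (∀ i, d i ∈ Set.Icc (-1 : ℝ) 1) → IsUnit (A + B * Matrix.diagonal d))
    (w x : Fin n → ℝ) (hwx : A *ᵥ w + B *ᵥ |w| = A *ᵥ x + B *ᵥ |x|) : w = x := by
  obtain ⟨d, hd1, hd2⟩ := gave_absd w x
  have hnull : (A + B * Matrix.diagonal d) *ᵥ (w - x) = 0 := by
    rw [gave_key]
    have hdz : d * (w - x) = |w| - |x| := by
      funext i
      simp only [Pi.mul_apply, Pi.sub_apply, Pi.abs_apply]
      rw [← hd2 i]
    rw [hdz]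
    have e : A *ᵥ (w - x) + B *ᵥ (|w| - |x|)
        = (A *ᵥ w + B *ᵥ |w|) - (A *ᵥ x + B *ᵥ |x|) := by
      rw [Matrix.mulVec_sub, Matrix.mulVec_sub]
      abel
    rw [e, hwx, sub_self]
  have hd' : ∀ i, d i ∈ Set.Icc (-1 : ℝ) 1 := fun i => Set.mem_Icc.mpr (abs_le.mp (hd1 i))
  have := gave_cancel _ (h d hd') _ hnull
  exact sub_eq_zero.mp this

theorem stmt6 {n : ℕ} (A B : Matrix (Fin n) (Fin n) ℝ) :
    (∀ b : Fin n → ℝ, ∃! x : Fin n → ℝ, A *ᵥ x + B *ᵥ |x| = b) ↔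
      ∀ d : Fin n → ℝ, (∀ i, d i ∈ Set.Icc (-1 : ℝ) 1) →
        IsUnit (A + B * Matrix.diagonal d) := by
  classical
  constructor
  · intro H d hd
    by_contra hu
    have hdet : (A + B * Matrix.diagonal d).det = 0 := by
      by_contra hdet
      exact hu ((Matrix.isUnit_iff_isUnit_det _).mpr (isUnit_iff_ne_zero.mpr hdet))
    obtain ⟨z, hz0, hz⟩ := (Matrix.exists_mulVec_eq_zero_iff).mpr hdet
    set y : Fin n → ℝ :=
      fun i => if 0 ≤ z i then (d i - 1) * z i / 2 else -((d i + 1) * z i) / 2 with hy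
    have key : ∀ i, |y i + z i| = |y i| + d i * z i := by
      intro i
      have hdl : -1 ≤ d i := (Set.mem_Icc.mp (hd i)).1
      have hdr : d i ≤ 1 := (Set.mem_Icc.mp (hd i)).2
      by_cases hzi : 0 ≤ z i
      · have hyi : y i = (d i - 1) * z i / 2 := by rw [hy]; simp [hzi]
        have h1 : y i ≤ 0 := by rw [hyi]; nlinarith
        have h2 : 0 ≤ y i + z i := by rw [hyi]; nlinarith
        rw [abs_of_nonneg h2, abs_of_nonpos h1, hyi]
        ring
      · push_neg at hzi
        have hyi : y i = -((d i + 1) * z i) / 2 := by rw [hy]; simp [not_le.mpr hzi]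
        have h1 : 0 ≤ y i := by rw [hyi]; nlinarith
        have h2 : y i + z i ≤ 0 := by rw [hyi]; nlinarith
        rw [abs_of_nonpos h2, abs_of_nonneg h1, hyi]
        ring
    have habs : |y + z| = |y| + d * z := by
      funext i
      simp only [Pi.abs_apply, Pi.add_apply, Pi.mul_apply]
      exact key i
    have hxy : A *ᵥ (y + z) + B *ᵥ |y + z| = A *ᵥ y + B *ᵥ |y| := by
      rw [habs, Matrix.mulVec_add, Matrix.mulVec_add]
      have hBd : B *ᵥ (d * z) = (B * Matrix.diagonal d) *ᵥ z := by
        rw [← Matrix.mulVec_mulVec, gave_diagmul]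
      have hsum : A *ᵥ z + B *ᵥ (d * z) = (A + B * Matrix.diagonal d) *ᵥ z := by
        rw [hBd, Matrix.add_mulVec]
      have : A *ᵥ y + A *ᵥ z + (B *ᵥ |y| + B *ᵥ (d * z))
          = (A *ᵥ y + B *ᵥ |y|) + (A *ᵥ z + B *ᵥ (d * z)) := by abel
      rw [this, hsum, hz, add_zero]
    obtain ⟨w, hw, huni⟩ := H (A *ᵥ y + B *ᵥ |y|)
    have e1 : y + z = w := huni _ hxy
    have e2 : y = w := huni _ rfl
    rw [← e2] at e1
    exact hz0 (by simpa using e1)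
  · intro h b
    have h' : ∀ d : Fin n → ℝ, (∀ i, |d i| ≤ 1) →
        (∀ i ∉ (Finset.univ : Finset (Fin n)), d i = 0) →
        IsUnit (A + B * Matrix.diagonal d) :=
      fun d hd _ => h d (fun i => Set.mem_Icc.mpr (abs_le.mp (hd i)))
    obtain ⟨x, hx⟩ := gave_exists Finset.univ A B h' b
    have hxeq : A *ᵥ x + B *ᵥ |x| = b := by
      have e : (fun i => if i ∈ (Finset.univ : Finset (Fin n)) then |x i| else 0) = |x| := by
        funext i; simp [Pi.abs_apply]
      rwa [e] at hx
    exact ⟨x, hxeq, fun w hw => gave_inj A B h w x (hw.trans hxeq.symm)⟩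
end

section
/- If A ∈ ℝ^{n×n} is nonsingular and ρ(A^{-1} B D̄) < 1 for every diagonal matrix D̄ with diagonal entries in [−1,1], then the GAVE Ax + B|x| = b has a unique solution for every b ∈ ℝ^n. -/
open Matrix
open scoped NNReal

lemma signdec {n : ℕ} (x y : Fin n → ℝ) :
    ∃ d : Fin n → ℝ, (∀ i, d i ∈ Set.Icc (-1:ℝ) 1) ∧
      ∀ i, |x i| - |y i| = d i * (x i - y i) := by
  refine ⟨fun i => if x i = y i then 0 else (|x i| - |y i|)/(x i - y i), fun i => ?_, fun i => ?_⟩ <;>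
    dsimp only <;> split_ifs with hxy
  · constructor <;> norm_num
  · have h1 : x i - y i ≠ 0 := sub_ne_zero_of_ne hxy
    rw [Set.mem_Icc, ← abs_le, abs_div, div_le_one (abs_pos.mpr h1)]
    exact abs_abs_sub_abs_le_abs_sub _ _
  · rw [hxy]; ring
  · have h1 : x i - y i ≠ 0 := sub_ne_zero_of_ne hxy
    field_simp



lemma unit_of_specRad {n : ℕ} (A B : Matrix (Fin n) (Fin n) ℝ) (hA : IsUnit A)
    (d : Fin n → ℝ) (hs : specRad (A⁻¹ * B * Matrix.diagonal d) < 1) :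
    IsUnit (A + B * Matrix.diagonal d) := by
  set M := A⁻¹ * B * Matrix.diagonal d with hM
  have hdA : IsUnit A.det := (Matrix.isUnit_iff_isUnit_det A).mp hA
  have key : A + B * Matrix.diagonal d = A * (1 + M) := by
    rw [hM, Matrix.mul_add, Matrix.mul_one, ← Matrix.mul_assoc, ← Matrix.mul_assoc,
      Matrix.mul_nonsing_inv A hdA, Matrix.one_mul]
  rw [key]
  refine hA.mul ?_
  by_contra hu
  have hdet : (1 + M).det = 0 := by
    by_contra hd
    exact hu ((Matrix.isUnit_iff_isUnit_det _).mpr (isUnit_iff_ne_zero.mpr hd))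
  have hmem : (-1 : ℂ) ∈ spectrum ℂ (M.map Complex.ofReal) := by
    rw [spectrum.mem_iff]
    intro hu2
    rw [Matrix.isUnit_iff_isUnit_det] at hu2
    apply isUnit_iff_ne_zero.mp hu2
    have : algebraMap ℂ (Matrix (Fin n) (Fin n) ℂ) (-1) - M.map Complex.ofReal
        = -((1 + M).map Complex.ofReal) := by
      ext i j
      simp [Matrix.algebraMap_matrix_apply, Matrix.one_apply]
      split_ifs <;> simp <;> ring
    rw [this, Matrix.det_neg]
    have h2 : ((1 + M).map Complex.ofReal).det = 0 := by
      have h3 := RingHom.map_det Complex.ofRealHom (1 + M)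
      rw [RingHom.mapMatrix_apply] at h3
      rw [show ((1+M).map Complex.ofReal) = ((1+M).map Complex.ofRealHom) from rfl, ← h3, hdet]
      simp
    rw [h2, mul_zero]
  have hle : (1 : ENNReal) ≤ specRad M := by
    have := le_iSup₂ (f := fun k (_ : k ∈ spectrum ℂ (M.map Complex.ofReal)) => (‖k‖₊ : ENNReal)) (-1) hmem
    simpa [specRad, spectralRadius] using this
  exact absurd hs (not_lt.mpr hle)

lemma exists_colip {n : ℕ} (A B : Matrix (Fin n) (Fin n) ℝ)
    (hunit : ∀ d : Fin n → ℝ, (∀ i, d i ∈ Set.Icc (-1:ℝ) 1) → IsUnit (A + B * Matrix.diagonal d)) :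
    ∃ c : ℝ, 0 < c ∧ ∀ d : Fin n → ℝ, (∀ i, d i ∈ Set.Icc (-1:ℝ) 1) →
      ∀ v : Fin n → ℝ, c * ‖v‖ ≤ ‖(A + B * Matrix.diagonal d) *ᵥ v‖ := by
  rcases Nat.eq_zero_or_pos n with hn | hn
  · subst hn
    exact ⟨1, one_pos, fun d _ v => by
      rw [Subsingleton.elim v 0, Subsingleton.elim ((A + B * Matrix.diagonal d) *ᵥ 0) 0]
      simp⟩
  · haveI : Nonempty (Fin n) := ⟨⟨0, hn⟩⟩
    set K : Set ((Fin n → ℝ) × (Fin n → ℝ)) :=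
      (Set.Icc (fun _ => (-1:ℝ)) (fun _ => 1)) ×ˢ Metric.sphere (0 : Fin n → ℝ) 1 with hK
    have hKc : IsCompact K := (isCompact_Icc).prod (isCompact_sphere _ _)
    have hne : K.Nonempty := by
      refine ⟨(0, fun _ => 1), ?_, ?_⟩
      · exact ⟨fun i => by norm_num, fun i => by norm_num⟩
      · simp [Metric.mem_sphere, dist_zero_right, pi_norm_const]
    have hcont : Continuous fun p : (Fin n → ℝ) × (Fin n → ℝ) =>
        ‖(A + B * Matrix.diagonal p.1) *ᵥ p.2‖ := by
      apply Continuous.norm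
      apply continuous_pi; intro i
      have : (fun p : (Fin n → ℝ) × (Fin n → ℝ) => ((A + B * diagonal p.1) *ᵥ p.2) i)
          = fun p => ∑ j, (A i j + B i j * p.1 j) * p.2 j := by
        funext p
        simp [Matrix.mulVec, dotProduct, Matrix.add_apply, Matrix.mul_diagonal]
      rw [this]
      exact continuous_finset_sum _ fun j _ =>
        ((continuous_const.add (continuous_const.mul
          ((continuous_apply j).comp continuous_fst))).mul
          ((continuous_apply j).comp continuous_snd))
    obtain ⟨p0, hp0K, hmin⟩ := hKc.exists_isMinOn hne hcont.continuousOn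
    have hd0 : ∀ i, p0.1 i ∈ Set.Icc (-1:ℝ) 1 := by
      intro i
      rcases hp0K with ⟨h1, _⟩
      rw [Set.mem_Icc] at h1
      exact ⟨h1.1 i, h1.2 i⟩
    have hv1 : ‖p0.2‖ = 1 := by
      rcases hp0K with ⟨_, h2⟩
      simpa [dist_zero_right] using h2
    set c := ‖(A + B * Matrix.diagonal p0.1) *ᵥ p0.2‖ with hc
    have hcpos : 0 < c := by
      rcases lt_or_eq_of_le (norm_nonneg ((A + B * Matrix.diagonal p0.1) *ᵥ p0.2)) with hlt | heq
      · exact hlt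
      · exfalso
        have hz : (A + B * Matrix.diagonal p0.1) *ᵥ p0.2 = 0 := norm_eq_zero.mp heq.symm
        have hu := hunit p0.1 hd0
        have hud := (Matrix.isUnit_iff_isUnit_det _).mp hu
        have : p0.2 = 0 := by
          have := congrArg (fun w => (A + B * Matrix.diagonal p0.1)⁻¹ *ᵥ w) hz
          simpa [Matrix.mulVec_mulVec, Matrix.nonsing_inv_mul _ hud] using this
        rw [this, norm_zero] at hv1; exact one_ne_zero hv1.symm
    refine ⟨c, hcpos, fun d hd v => ?_⟩
    rcases eq_or_ne v 0 with rfl | hv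
    · simp
    · have hnv : 0 < ‖v‖ := norm_pos_iff.mpr hv
      set u := ‖v‖⁻¹ • v with hu
      have hu1 : ‖u‖ = 1 := by
        rw [hu, norm_smul, norm_inv, norm_norm, inv_mul_cancel₀ hnv.ne']
      have hmem : (d, u) ∈ K := by
        constructor
        · rw [Set.mem_Icc]
          exact ⟨fun i => (hd i).1, fun i => (hd i).2⟩
        · simpa [dist_zero_right] using hu1
      have := hmin hmem
      simp only [Set.mem_setOf_eq] at this
      have heq : ‖(A + B * Matrix.diagonal d) *ᵥ u‖
          = ‖v‖⁻¹ * ‖(A + B * Matrix.diagonal d) *ᵥ v‖ := by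
        rw [hu, Matrix.mulVec_smul, norm_smul, norm_inv, norm_norm]
      rw [heq] at this
      calc c * ‖v‖ ≤ (‖v‖⁻¹ * ‖(A + B * Matrix.diagonal d) *ᵥ v‖) * ‖v‖ :=
            mul_le_mul_of_nonneg_right this (norm_nonneg v)
        _ = ‖(A + B * Matrix.diagonal d) *ᵥ v‖ := by field_simp

lemma decomp {n : ℕ} (A B : Matrix (Fin n) (Fin n) ℝ) (t : ℝ) (ht : |t| ≤ 1)
    (x y : Fin n → ℝ) :
    ∃ d : Fin n → ℝ, (∀ i, d i ∈ Set.Icc (-1:ℝ) 1) ∧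
      (A *ᵥ x + t • (B *ᵥ |x|)) - (A *ᵥ y + t • (B *ᵥ |y|))
        = (A + B * Matrix.diagonal d) *ᵥ (x - y) := by
  obtain ⟨d₀, hd₀1, hd₀2⟩ := signdec x y
  refine ⟨t • d₀, fun i => ?_, ?_⟩
  · rw [Set.mem_Icc, ← abs_le]
    have h1 := (hd₀1 i)
    rw [Set.mem_Icc, ← abs_le] at h1
    calc |(t • d₀) i| = |t| * |d₀ i| := by rw [Pi.smul_apply, smul_eq_mul, abs_mul]
      _ ≤ 1 * 1 := mul_le_mul ht h1 (abs_nonneg _) zero_le_one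
      _ = 1 := by norm_num
  · funext i
    simp only [Matrix.add_mulVec, Pi.add_apply, Pi.sub_apply, Pi.smul_apply, smul_eq_mul]
    have hA : (A *ᵥ (x - y)) i = (A *ᵥ x) i - (A *ᵥ y) i := by
      rw [Matrix.mulVec_sub]; rfl
    have hB : ((B * Matrix.diagonal (t • d₀)) *ᵥ (x - y)) i
        = t * ((B *ᵥ |x|) i - (B *ᵥ |y|) i) := by
      have : (B *ᵥ |x|) i - (B *ᵥ |y|) i = (B *ᵥ (|x| - |y|)) i := by
        rw [Matrix.mulVec_sub]; rfl
      rw [this]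
      simp only [Matrix.mulVec, dotProduct, Matrix.mul_diagonal, Pi.sub_apply,
        Pi.smul_apply, smul_eq_mul, Pi.abs_apply]
      rw [Finset.mul_sum]
      refine Finset.sum_congr rfl fun j _ => ?_
      rw [hd₀2 j]
      ring
    rw [hA, hB]
    ring

lemma bmv_bound {n : ℕ} (B : Matrix (Fin n) (Fin n) ℝ) :
    ∃ Cb : ℝ, 0 ≤ Cb ∧ ∀ x y : Fin n → ℝ,
      ‖(B *ᵥ |x|) - (B *ᵥ |y|)‖ ≤ Cb * ‖x - y‖ := by
  refine ⟨∑ i, ∑ j, |B i j|, Finset.sum_nonneg fun i _ =>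
    Finset.sum_nonneg fun j _ => abs_nonneg _, fun x y => ?_⟩
  have habs : ‖|x| - |y|‖ ≤ ‖x - y‖ := by
    rw [pi_norm_le_iff_of_nonneg (norm_nonneg _)]
    intro i
    calc ‖(|x| - |y|) i‖ = |(|x i| - |y i|)| := by rfl
      _ ≤ |x i - y i| := abs_abs_sub_abs_le_abs_sub _ _
      _ = ‖(x - y) i‖ := rfl
      _ ≤ ‖x - y‖ := norm_le_pi_norm _ i
  have hBw : ∀ w : Fin n → ℝ, ‖B *ᵥ w‖ ≤ (∑ i, ∑ j, |B i j|) * ‖w‖ := by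
    intro w
    rw [pi_norm_le_iff_of_nonneg (by positivity)]
    intro i
    calc ‖(B *ᵥ w) i‖ = |∑ j, B i j * w j| := rfl
      _ ≤ ∑ j, |B i j * w j| := Finset.abs_sum_le_sum_abs _ _
      _ ≤ ∑ j, |B i j| * ‖w‖ := Finset.sum_le_sum fun j _ => by
          rw [abs_mul]
          exact mul_le_mul_of_nonneg_left (norm_le_pi_norm w j) (abs_nonneg _)
      _ = (∑ j, |B i j|) * ‖w‖ := by rw [Finset.sum_mul]
      _ ≤ (∑ i, ∑ j, |B i j|) * ‖w‖ := by
          apply mul_le_mul_of_nonneg_right _ (norm_nonneg w)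
          exact Finset.single_le_sum (f := fun i => ∑ j, |B i j|)
            (fun i _ => Finset.sum_nonneg fun j _ => abs_nonneg _) (Finset.mem_univ i)
    
  calc ‖(B *ᵥ |x|) - (B *ᵥ |y|)‖ = ‖B *ᵥ (|x| - |y|)‖ := by rw [Matrix.mulVec_sub]
    _ ≤ (∑ i, ∑ j, |B i j|) * ‖|x| - |y|‖ := hBw _
    _ ≤ (∑ i, ∑ j, |B i j|) * ‖x - y‖ :=
        mul_le_mul_of_nonneg_left habs (by positivity)

lemma step_surj {n : ℕ} (A B : Matrix (Fin n) (Fin n) ℝ) (c Cb : ℝ) (hc : 0 < c) (hCb0 : (0:ℝ) ≤ Cb)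
    (hcolip : ∀ t : ℝ, |t| ≤ 1 → ∀ x y : Fin n → ℝ,
      c * ‖x - y‖ ≤ ‖(A *ᵥ x + t • (B *ᵥ |x|)) - (A *ᵥ y + t • (B *ᵥ |y|))‖)
    (hB : ∀ x y : Fin n → ℝ, ‖(B *ᵥ |x|) - (B *ᵥ |y|)‖ ≤ Cb * ‖x - y‖)
    (t s : ℝ) (ht : |t| ≤ 1) (hts : |t - s| * Cb ≤ c / 2)
    (hPt : ∀ b, ∃ x, A *ᵥ x + t • (B *ᵥ |x|) = b) :
    ∀ b, ∃ x, A *ᵥ x + s • (B *ᵥ |x|) = b := by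
  intro b
  choose G hG using hPt
  set Φ : (Fin n → ℝ) → (Fin n → ℝ) := fun x => G (b + (t - s) • (B *ᵥ |x|)) with hΦ
  have hGlip : ∀ u v, ‖G u - G v‖ ≤ c⁻¹ * ‖u - v‖ := by
    intro u v
    have h1 := hcolip t ht (G u) (G v)
    rw [hG u, hG v] at h1
    rw [le_inv_mul_iff₀ hc]
    exact h1
  have hlip : LipschitzWith (1/2 : ℝ≥0) Φ := by
    apply LipschitzWith.of_dist_le_mul
    intro x y
    rw [dist_eq_norm, dist_eq_norm]
    have e1 : (b + (t - s) • (B *ᵥ |x|)) - (b + (t - s) • (B *ᵥ |y|))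
        = (t - s) • ((B *ᵥ |x|) - (B *ᵥ |y|)) := by module
    calc ‖Φ x - Φ y‖ ≤ c⁻¹ * ‖(b + (t - s) • (B *ᵥ |x|)) - (b + (t - s) • (B *ᵥ |y|))‖ :=
          hGlip _ _
      _ = c⁻¹ * (|t - s| * ‖(B *ᵥ |x|) - (B *ᵥ |y|)‖) := by
          rw [e1, norm_smul, Real.norm_eq_abs]
      _ ≤ c⁻¹ * (|t - s| * (Cb * ‖x - y‖)) := by
          apply mul_le_mul_of_nonneg_left _ (by positivity)
          exact mul_le_mul_of_nonneg_left (hB x y) (abs_nonneg _)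
      _ = (|t - s| * Cb) * (c⁻¹ * ‖x - y‖) := by ring
      _ ≤ (c / 2) * (c⁻¹ * ‖x - y‖) := by
          apply mul_le_mul_of_nonneg_right hts (by positivity)
      _ = (1/2 : ℝ≥0) * ‖x - y‖ := by
          push_cast
          field_simp
  obtain ⟨x, hx, -, -⟩ := ContractingWith.exists_fixedPoint ⟨by rw [← NNReal.coe_lt_coe]; norm_num, hlip⟩ 0 (edist_ne_top _ _)
  refine ⟨x, ?_⟩
  have hfix : A *ᵥ x + t • (B *ᵥ |x|) = b + (t - s) • (B *ᵥ |x|) := by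
    conv_lhs => rw [← hx]
    exact hG _
  have : A *ᵥ x + s • (B *ᵥ |x|) = (A *ᵥ x + t • (B *ᵥ |x|)) - (t - s) • (B *ᵥ |x|) := by
    module
  rw [this, hfix]
  abel

theorem stmt10 {n : ℕ} (A B : Matrix (Fin n) (Fin n) ℝ) (hA : IsUnit A)
    (h : ∀ d : Fin n → ℝ, (∀ i, d i ∈ Set.Icc (-1 : ℝ) 1) →
      specRad (A⁻¹ * B * Matrix.diagonal d) < 1) :
    ∀ b : Fin n → ℝ, ∃! x : Fin n → ℝ, A *ᵥ x + B *ᵥ |x| = b := by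
  have hunit : ∀ d : Fin n → ℝ, (∀ i, d i ∈ Set.Icc (-1:ℝ) 1) →
      IsUnit (A + B * Matrix.diagonal d) := fun d hd => unit_of_specRad A B hA d (h d hd)
  obtain ⟨c, hc, hcol⟩ := exists_colip A B hunit
  obtain ⟨Cb, hCb0, hB⟩ := bmv_bound B
  have hcolip : ∀ t : ℝ, |t| ≤ 1 → ∀ x y : Fin n → ℝ,
      c * ‖x - y‖ ≤ ‖(A *ᵥ x + t • (B *ᵥ |x|)) - (A *ᵥ y + t • (B *ᵥ |y|))‖ := by
    intro t ht x y
    obtain ⟨d, hd, heq⟩ := decomp A B t ht x y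
    rw [heq]
    exact hcol d hd (x - y)
  set δ := c / (2 * (Cb + 1)) with hδdef
  have hδ : 0 < δ := by positivity
  have hstep : ∀ t s : ℝ, t ∈ Set.Icc (0:ℝ) 1 → s ∈ Set.Icc (0:ℝ) 1 → |t - s| ≤ δ →
      (∀ b, ∃ x, A *ᵥ x + t • (B *ᵥ |x|) = b) → (∀ b, ∃ x, A *ᵥ x + s • (B *ᵥ |x|) = b) := by
    intro t s ht hs hts hPt
    refine step_surj A B c Cb hc hCb0 hcolip hB t s ?_ ?_ hPt
    · rw [abs_le]; exact ⟨by linarith [ht.1], ht.2⟩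
    · calc |t - s| * Cb ≤ δ * (Cb + 1) :=
          mul_le_mul hts (by linarith) hCb0 (le_of_lt hδ)
        _ = c / 2 := by
          rw [hδdef]
          field_simp
  have hdA : IsUnit A.det := (Matrix.isUnit_iff_isUnit_det A).mp hA
  have hP0 : ∀ b, ∃ x, A *ᵥ x + (0:ℝ) • (B *ᵥ |x|) = b := by
    intro b
    refine ⟨A⁻¹ *ᵥ b, ?_⟩
    rw [zero_smul, add_zero, Matrix.mulVec_mulVec, Matrix.mul_nonsing_inv A hdA,
      Matrix.one_mulVec]
  have hiter : ∀ k : ℕ, ∀ b, ∃ x, A *ᵥ x + (min 1 ((k:ℝ) * δ)) • (B *ᵥ |x|) = b := by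
    intro k
    induction k with
    | zero =>
      have : min (1:ℝ) ((0:ℕ) * δ) = 0 := by
        push_cast; rw [zero_mul, min_eq_right (by norm_num)]
      rw [this]; exact hP0
    | succ k ih =>
      have e : (((k+1:ℕ)):ℝ) * δ = (k:ℝ)*δ + δ := by push_cast; ring
      have hkd : (0:ℝ) ≤ (k:ℝ)*δ := by positivity
      refine hstep (min 1 ((k:ℝ)*δ)) (min 1 ((((k+1:ℕ)):ℝ) * δ))
        ⟨le_min zero_le_one hkd, min_le_left _ _⟩
        ⟨le_min zero_le_one (by rw [e]; linarith), min_le_left _ _⟩ ?_ ih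
      rw [e, abs_le]
      rcases le_total 1 ((k:ℝ)*δ) with hk | hk
      · rw [min_eq_left hk, min_eq_left (by linarith)]
        constructor <;> linarith
      · rw [min_eq_right hk]
        rcases le_total 1 ((k:ℝ)*δ + δ) with hk2 | hk2
        · rw [min_eq_left hk2]
          constructor <;> linarith
        · rw [min_eq_right hk2]
          constructor <;> linarith
  have hP1 : ∀ b, ∃ x, A *ᵥ x + (1:ℝ) • (B *ᵥ |x|) = b := by
    have h1 : (1:ℝ) ≤ (⌈1/δ⌉₊ : ℝ) * δ := by
      have := Nat.le_ceil (1/δ)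
      calc (1:ℝ) = (1/δ) * δ := by field_simp
        _ ≤ (⌈1/δ⌉₊ : ℝ) * δ := mul_le_mul_of_nonneg_right this (le_of_lt hδ)
    have := hiter ⌈1/δ⌉₊
    rwa [min_eq_left h1] at this
  intro b
  obtain ⟨x, hx⟩ := hP1 b
  rw [one_smul] at hx
  refine ⟨x, hx, fun y hy => ?_⟩
  have := hcolip 1 (by norm_num) y x
  rw [one_smul, one_smul, hy, hx, sub_self, norm_zero] at this
  have hnorm : ‖y - x‖ = 0 := le_antisymm (by nlinarith) (norm_nonneg _)
  have : y - x = 0 := norm_eq_zero.mp hnorm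
  exact sub_eq_zero.mp this
end

section
/- If A ∈ ℝ^{n×n} is nonsingular and σ_1(A^{-1}B) < 1 (the largest singular value of A^{-1}B is less than 1), then the GAVE Ax + B|x| = b has a unique solution for every b ∈ ℝ^n. -/
open Matrix

/-! ### Auxiliary lemmas -/

lemma gave_quadForm {n : ℕ} (M : Matrix (Fin n) (Fin n) ℝ) (v : Fin n → ℝ) :
    (M *ᵥ v) ⬝ᵥ (M *ᵥ v) = ∑ i, (isHermitian_conjTranspose_mul_self M).eigenvalues i *
      ((star ((isHermitian_conjTranspose_mul_self M).eigenvectorUnitary :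
        Matrix (Fin n) (Fin n) ℝ) *ᵥ v) i)^2 := by
  set hH := isHermitian_conjTranspose_mul_self M with hhH
  set U : Matrix (Fin n) (Fin n) ℝ := (hH.eigenvectorUnitary : Matrix (Fin n) (Fin n) ℝ) with hU
  set w : Fin n → ℝ := star U *ᵥ v with hw
  have hct : Mᴴ = Mᵀ := by ext i j; simp [conjTranspose_apply]
  have h1 : (M *ᵥ v) ⬝ᵥ (M *ᵥ v) = v ⬝ᵥ ((Mᴴ * M) *ᵥ v) := by
    rw [hct, ← mulVec_mulVec, dotProduct_mulVec v, vecMul_transpose]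
  have hsU : star U = Uᵀ := by
    rw [star_eq_conjTranspose]; ext i j; simp [conjTranspose_apply]
  have h2 : v ⬝ᵥ ((Mᴴ * M) *ᵥ v) =
      v ⬝ᵥ ((U * diagonal (RCLike.ofReal ∘ hH.eigenvalues) * star U) *ᵥ v) :=
    congrArg (fun X => v ⬝ᵥ (X *ᵥ v)) hH.spectral_theorem
  have hwv : w = v ᵥ* U := by rw [hw, hsU, mulVec_transpose]
  rw [h1, h2, ← mulVec_mulVec, ← mulVec_mulVec, dotProduct_mulVec v, ← hwv, hw]
  simp [dotProduct, mulVec_diagonal, hw]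
  exact Finset.sum_congr rfl fun i _ => by ring

lemma gave_normW {n : ℕ} (M : Matrix (Fin n) (Fin n) ℝ) (v : Fin n → ℝ) :
    (star ((isHermitian_conjTranspose_mul_self M).eigenvectorUnitary :
      Matrix (Fin n) (Fin n) ℝ) *ᵥ v)
    ⬝ᵥ (star ((isHermitian_conjTranspose_mul_self M).eigenvectorUnitary :
      Matrix (Fin n) (Fin n) ℝ) *ᵥ v) = v ⬝ᵥ v := by
  set hH := isHermitian_conjTranspose_mul_self M
  set U : Matrix (Fin n) (Fin n) ℝ := (hH.eigenvectorUnitary : Matrix (Fin n) (Fin n) ℝ)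
  have hUs : U * star U = 1 := (Matrix.mem_unitaryGroup_iff).mp hH.eigenvectorUnitary.2
  have hsU : star U = Uᵀ := by
    rw [star_eq_conjTranspose]; ext i j; simp [conjTranspose_apply]
  rw [hsU, dotProduct_mulVec, vecMul_transpose, mulVec_mulVec, ← hsU, hUs, one_mulVec]

lemma gave_eig_nonneg {n : ℕ} (M : Matrix (Fin n) (Fin n) ℝ) (i : Fin n) :
    0 ≤ (isHermitian_conjTranspose_mul_self M).eigenvalues i :=
  (Matrix.posSemidef_conjTranspose_mul_self M).eigenvalues_nonneg i

lemma gave_maxSV_nonneg {n : ℕ} (M : Matrix (Fin n) (Fin n) ℝ) : 0 ≤ maxSV M := by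
  rcases Nat.eq_zero_or_pos n with hn | hn
  · subst hn
    simp [maxSV, iSup, Set.range_eq_empty, Real.sSup_empty]
  · have i : Fin n := ⟨0, hn⟩
    have h := le_ciSup (f := singVals M) (Set.Finite.bddAbove (Set.finite_range _)) i
    exact le_trans (Real.sqrt_nonneg _) h

lemma gave_eig_le {n : ℕ} (M : Matrix (Fin n) (Fin n) ℝ) (i : Fin n) :
    (isHermitian_conjTranspose_mul_self M).eigenvalues i ≤ maxSV M ^ 2 := by
  have h1 : singVals M i ≤ maxSV M :=
    le_ciSup (f := singVals M) (Set.Finite.bddAbove (Set.finite_range _)) i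
  have h2 : singVals M i ^ 2 = (isHermitian_conjTranspose_mul_self M).eigenvalues i := by
    rw [singVals, Real.sq_sqrt (gave_eig_nonneg M i)]
  rw [← h2]
  exact pow_le_pow_left₀ (Real.sqrt_nonneg _) h1 2

lemma gave_key_s13 {n : ℕ} (M : Matrix (Fin n) (Fin n) ℝ) (v : Fin n → ℝ) :
    (M *ᵥ v) ⬝ᵥ (M *ᵥ v) ≤ maxSV M ^ 2 * (v ⬝ᵥ v) := by
  rw [gave_quadForm, ← gave_normW M v]
  set w := (star ((isHermitian_conjTranspose_mul_self M).eigenvectorUnitary :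
    Matrix (Fin n) (Fin n) ℝ) *ᵥ v)
  calc ∑ i, (isHermitian_conjTranspose_mul_self M).eigenvalues i * (w i)^2
      ≤ ∑ i, maxSV M ^ 2 * (w i)^2 :=
        Finset.sum_le_sum fun i _ => mul_le_mul_of_nonneg_right (gave_eig_le M i) (sq_nonneg _)
    _ = maxSV M ^ 2 * (w ⬝ᵥ w) := by
        simp only [dotProduct, Finset.mul_sum]
        exact Finset.sum_congr rfl fun i _ => by ring

/-- The Euclidean norm of a plain vector. -/
noncomputable def gaveNorm {n : ℕ} (v : Fin n → ℝ) : ℝ := Real.sqrt (v ⬝ᵥ v)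

lemma gaveNorm_nonneg {n : ℕ} (v : Fin n → ℝ) : 0 ≤ gaveNorm v := Real.sqrt_nonneg _

lemma gaveNorm_eq_zero {n : ℕ} {v : Fin n → ℝ} (h : gaveNorm v = 0) : v = 0 := by
  have hnn : 0 ≤ v ⬝ᵥ v := Finset.sum_nonneg fun i _ => mul_self_nonneg _
  rw [gaveNorm, Real.sqrt_eq_zero hnn] at h
  exact dotProduct_self_eq_zero.mp h

lemma gaveNorm_mulVec_le {n : ℕ} (M : Matrix (Fin n) (Fin n) ℝ) (v : Fin n → ℝ) :
    gaveNorm (M *ᵥ v) ≤ maxSV M * gaveNorm v := by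
  rw [gaveNorm, gaveNorm]
  calc Real.sqrt ((M *ᵥ v) ⬝ᵥ (M *ᵥ v)) ≤ Real.sqrt (maxSV M ^ 2 * (v ⬝ᵥ v)) :=
        Real.sqrt_le_sqrt (gave_key_s13 M v)
    _ = maxSV M * Real.sqrt (v ⬝ᵥ v) := by
        rw [Real.sqrt_mul (sq_nonneg _), Real.sqrt_sq (gave_maxSV_nonneg M)]

lemma gaveNorm_abs_sub {n : ℕ} (x y : Fin n → ℝ) :
    gaveNorm (|y| - |x|) ≤ gaveNorm (x - y) := by
  apply Real.sqrt_le_sqrt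
  apply Finset.sum_le_sum
  intro i _
  have h1 := abs_abs_sub_abs_le_abs_sub (y i) (x i)
  calc (|y| - |x|) i * (|y| - |x|) i
      = |(|y i| - |x i|)| * |(|y i| - |x i|)| := by
        simp [Pi.sub_apply, Pi.abs_apply, abs_mul_abs_self]
    _ ≤ |y i - x i| * |y i - x i| := mul_self_le_mul_self (abs_nonneg _) h1
    _ = (x - y) i * (x - y) i := by simp [Pi.sub_apply]; ring

lemma gaveNorm_euclid {n : ℕ} (v : EuclideanSpace ℝ (Fin n)) :
    ‖v‖ = gaveNorm (WithLp.equiv 2 (Fin n → ℝ) v) := by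
  rw [EuclideanSpace.norm_eq, gaveNorm]
  congr 1
  simp [dotProduct, Real.norm_eq_abs, sq_abs, pow_two]

lemma gave_fixedpt {n : ℕ} (K : ℝ) (hK0 : 0 ≤ K) (hK1 : K < 1)
    (g : (Fin n → ℝ) → (Fin n → ℝ))
    (hg : ∀ x y, gaveNorm (g x - g y) ≤ K * gaveNorm (x - y)) :
    ∃ x, g x = x := by
  set G : EuclideanSpace ℝ (Fin n) → EuclideanSpace ℝ (Fin n) :=
    fun v => (WithLp.equiv 2 (Fin n → ℝ)).symm (g (WithLp.equiv 2 (Fin n → ℝ) v)) with hG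
  have hlip : LipschitzWith K.toNNReal G := by
    apply LipschitzWith.of_dist_le_mul
    intro x y
    rw [dist_eq_norm, dist_eq_norm, gaveNorm_euclid, gaveNorm_euclid]
    have h1 : (WithLp.equiv 2 (Fin n → ℝ)) (G x - G y)
        = g (WithLp.equiv 2 (Fin n → ℝ) x) - g (WithLp.equiv 2 (Fin n → ℝ) y) := by
      simp [hG]
    have h2 : (WithLp.equiv 2 (Fin n → ℝ)) (x - y)
        = (WithLp.equiv 2 (Fin n → ℝ)) x - (WithLp.equiv 2 (Fin n → ℝ)) y := by simp
    rw [h1, h2, Real.coe_toNNReal K hK0]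
    exact hg _ _
  have hcontr : ContractingWith K.toNNReal G := by
    constructor
    · rw [← Real.toNNReal_one]
      exact (Real.toNNReal_lt_toNNReal_iff_of_nonneg hK0).mpr hK1
    · exact hlip
  set x₀ := ContractingWith.fixedPoint G hcontr with hx₀
  have hfix : G x₀ = x₀ := ContractingWith.fixedPoint_isFixedPt hcontr
  refine ⟨(WithLp.equiv 2 (Fin n → ℝ)) x₀, ?_⟩
  have := congrArg (WithLp.equiv 2 (Fin n → ℝ)) hfix
  simpa [hG] using this

theorem stmt13 {n : ℕ} (A B : Matrix (Fin n) (Fin n) ℝ) (hA : IsUnit A)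
    (h : maxSV (A⁻¹ * B) < 1) :
    ∀ b : Fin n → ℝ, ∃! x : Fin n → ℝ, A *ᵥ x + B *ᵥ |x| = b := by
  intro b
  set M := A⁻¹ * B with hM
  set c := A⁻¹ *ᵥ b with hc
  set K := maxSV M with hK
  have hK0 : 0 ≤ K := gave_maxSV_nonneg M
  have hAdet : IsUnit A.det := (isUnit_iff_isUnit_det A).mp hA
  have hAiA : A⁻¹ * A = 1 := nonsing_inv_mul A hAdet
  have hAAi : A * A⁻¹ = 1 := mul_nonsing_inv A hAdet
  set g : (Fin n → ℝ) → (Fin n → ℝ) := fun x => c - M *ᵥ |x| with hg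
  have hequiv : ∀ x : Fin n → ℝ, (A *ᵥ x + B *ᵥ |x| = b) ↔ g x = x := by
    intro x
    constructor
    · intro hx
      have h2 := congrArg (fun v => A⁻¹ *ᵥ v) hx
      simp only [mulVec_add, mulVec_mulVec] at h2
      rw [hAiA, one_mulVec, ← hM, ← hc] at h2
      exact (eq_sub_of_add_eq h2).symm
    · intro hx
      have hx2 : x = c - M *ᵥ |x| := hx.symm
      have hx' : x + M *ᵥ |x| = c := by
        nth_rewrite 1 [hx2]
        abel
      have h2 := congrArg (fun v => A *ᵥ v) hx'
      simp only [mulVec_add, mulVec_mulVec] at h2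
      rw [hM, ← mul_assoc, hAAi, one_mul] at h2
      rw [hc, mulVec_mulVec, hAAi, one_mulVec] at h2
      exact h2
  have hlip : ∀ x y, gaveNorm (g x - g y) ≤ K * gaveNorm (x - y) := by
    intro x y
    have h1 : g x - g y = M *ᵥ (|y| - |x|) := by
      rw [hg]; simp only [mulVec_sub]; abel
    rw [h1]
    calc gaveNorm (M *ᵥ (|y| - |x|)) ≤ K * gaveNorm (|y| - |x|) := gaveNorm_mulVec_le M _
      _ ≤ K * gaveNorm (x - y) := mul_le_mul_of_nonneg_left (gaveNorm_abs_sub x y) hK0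
  obtain ⟨x₀, hx₀⟩ := gave_fixedpt K hK0 h g hlip
  refine ⟨x₀, (hequiv x₀).mpr hx₀, ?_⟩
  intro y hy
  have hyfix : g y = y := (hequiv y).mp hy
  have hd : gaveNorm (y - x₀) ≤ K * gaveNorm (y - x₀) := by
    have := hlip y x₀
    rw [hyfix, hx₀] at this
    exact this
  have h0 : gaveNorm (y - x₀) = 0 := by
    nlinarith [gaveNorm_nonneg (y - x₀)]
  have := gaveNorm_eq_zero h0
  exact sub_eq_zero.mp this
end
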